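/- arXiv:2405.05679 — 4 statements merged into one kernel-verified Lean document; each statement's English description precedes it below -/
import Mathlib

section
/- Suppose Assumptions ALL and AC hold. Set K0 := 2^{1−q} max{L, |∇²h^{(1)}(0)|, …, |∇²h^{(d)}(0)|}, K1 := max{K0, |∇h^{(1)}(0)|, …, |∇h^{(d)}(0)|}, R_OS := (b/a)^{1/(r−r̄)}, and L_OS := √d · K1 · (1 + 2 R_OS)^{ρ+q−1}. Then for all θ, θ̄ ∈ ℝ^d: ⟨θ − θ̄, h(θ) − h(θ̄)⟩ ≥ −L_OS |θ − θ̄|². -/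
open MeasureTheory ProbabilityTheory Real
open scoped RealInnerProductSpace ENNReal NNReal BigOperators

noncomputable section

/-- `h := ∇U`, the gradient of `U`. -/
def grad {d : ℕ} (U : EuclideanSpace ℝ (Fin d) → ℝ) (θ : EuclideanSpace ℝ (Fin d)) :
    EuclideanSpace ℝ (Fin d) :=
  gradient U θ

/-- `H := ∇²U`, the Hessian of `U`, as a continuous linear map. -/
def hess {d : ℕ} (U : EuclideanSpace ℝ (Fin d) → ℝ) (θ : EuclideanSpace ℝ (Fin d)) :
    EuclideanSpace ℝ (Fin d) →L[ℝ] EuclideanSpace ℝ (Fin d) :=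
  fderiv ℝ (fun x => gradient U x) θ

/-- `∇ h^{(i)}`, the gradient of the `i`-th component of `h = ∇U`. -/
def gradComp {d : ℕ} (U : EuclideanSpace ℝ (Fin d) → ℝ) (i : Fin d)
    (θ : EuclideanSpace ℝ (Fin d)) : EuclideanSpace ℝ (Fin d) :=
  gradient (fun y => gradient U y i) θ

/-- `∇² h^{(i)}`, the Hessian of the `i`-th component of `h = ∇U`. -/
def hessComp {d : ℕ} (U : EuclideanSpace ℝ (Fin d) → ℝ) (i : Fin d)
    (θ : EuclideanSpace ℝ (Fin d)) :
    EuclideanSpace ℝ (Fin d) →L[ℝ] EuclideanSpace ℝ (Fin d) :=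
  fderiv ℝ (fun x => gradComp U i x) θ

/-- `Υ`, the vector Laplacian of `h = ∇U`:  `Υ^{(i)}(θ) = ∑_j ∂²_{θ^{(j)}} h^{(i)}(θ)`. -/
def vecLap {d : ℕ} (U : EuclideanSpace ℝ (Fin d) → ℝ) (θ : EuclideanSpace ℝ (Fin d)) :
    EuclideanSpace ℝ (Fin d) :=
  (EuclideanSpace.equiv (Fin d) ℝ).symm
    (fun i => ∑ j, hessComp U i θ (EuclideanSpace.single j 1) j)


section Aux

open InnerProductSpace

/-- Concavity of `t ^ q` for `0 < q ≤ 1`: `1 + t ^ q ≤ 2 ^ (1 - q) * (1 + t) ^ q`. -/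
lemma concave_rpow_aux {q t : ℝ} (hq0 : 0 < q) (hq1 : q ≤ 1) (ht : 0 ≤ t) :
    1 + t ^ q ≤ 2 ^ ((1:ℝ) - q) * (1 + t) ^ q := by
  have hp : (1:ℝ) ≤ 1 / q := by
    rw [le_div_iff₀ hq0]; linarith
  have h := Real.arith_mean_le_rpow_mean (Finset.univ : Finset (Fin 2))
    ![1/2, 1/2] ![1, t ^ q] (by intro i _; fin_cases i <;> norm_num)
    (by simp [Fin.sum_univ_two]; norm_num)
    (by intro i _; fin_cases i <;> simp [Real.rpow_nonneg ht]) hp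
  simp only [Fin.sum_univ_two, Matrix.cons_val_zero, Matrix.cons_val_one, Matrix.head_cons] at h
  rw [one_div_one_div] at h
  have h2 : (t ^ q) ^ (1/q) = t := by
    rw [← Real.rpow_mul ht, mul_one_div, div_self hq0.ne', Real.rpow_one]
  rw [Real.one_rpow, h2] at h
  have h3 : (1/2 * 1 + 1/2 * t) = (1 + t) / 2 := by ring
  rw [h3, Real.div_rpow (by linarith) (by norm_num)] at h
  have h4 : (2:ℝ) ^ ((1:ℝ) - q) = 2 / 2 ^ q := by
    rw [Real.rpow_sub (by norm_num), Real.rpow_one]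
  rw [h4]
  have h5 : (0:ℝ) < 2 ^ q := Real.rpow_pos_of_pos (by norm_num) q
  rw [div_mul_eq_mul_div, le_div_iff₀ h5]
  have := mul_le_mul_of_nonneg_right h h5.le
  rw [div_mul_cancel₀ _ h5.ne'] at this
  nlinarith

end Aux

set_option maxHeartbeats 2000000 in
/-- Remark `rmk:oslc` of the paper: one-sided Lipschitz condition on
`h = ∇U` deduced from Assumptions ALL and AC. -/
theorem one_sided_lipschitz_from_ALL_AC
    (d ρ : ℕ) (hd : 1 ≤ d) (hρ : 2 ≤ ρ)
    (q : ℝ) (hq0 : 0 < q) (hq1 : q ≤ 1)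
    (U : EuclideanSpace ℝ (Fin d) → ℝ) (hU : ContDiff ℝ 3 U)
    -- Assumption ALL
    (L Kh KH : ℝ) (hL : 0 < L) (hKh : 0 < Kh) (hKH : 0 < KH)
    (hALL1 : ∀ (i : Fin d) (θ θ' : EuclideanSpace ℝ (Fin d)),
      ‖hessComp U i θ - hessComp U i θ'‖
        ≤ L * (1 + ‖θ‖ + ‖θ'‖) ^ ((ρ : ℝ) - 2) * ‖θ - θ'‖ ^ q)
    (hALL2 : ∀ θ : EuclideanSpace ℝ (Fin d), ‖grad U θ‖ ≤ Kh * (1 + ‖θ‖ ^ ((ρ : ℝ) + q)))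
    (hALL3 : ∀ θ : EuclideanSpace ℝ (Fin d), ‖hess U θ‖ ≤ KH * (1 + ‖θ‖ ^ ((ρ : ℝ) + q - 1)))
    -- Assumption AC, with r := ρ + q - 1
    (r a b rbar : ℝ) (hr : r = (ρ : ℝ) + q - 1)
    (ha : 0 < a) (hb : 0 < b) (hrbar0 : 0 ≤ rbar) (hrbar1 : rbar < r)
    (hAC : ∀ θ θ' : EuclideanSpace ℝ (Fin d),
      a * ‖θ - θ'‖ ^ 2 * (‖θ‖ ^ r + ‖θ'‖ ^ r) - b * ‖θ - θ'‖ ^ 2 * (‖θ‖ ^ rbar + ‖θ'‖ ^ rbar)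
        ≤ ⟪θ - θ', grad U θ - grad U θ'⟫)
    -- the constants
    (K0 K1 ROS LOS : ℝ)
    (hK0 : K0 = 2 ^ ((1 : ℝ) - q) * max L (⨆ i : Fin d, ‖hessComp U i 0‖))
    (hK1 : K1 = max K0 (⨆ i : Fin d, ‖gradComp U i 0‖))
    (hROS : ROS = (b / a) ^ (1 / (r - rbar)))
    (hLOS : LOS = Real.sqrt d * K1 * (1 + 2 * ROS) ^ ((ρ : ℝ) + q - 1)) :
    ∀ θ θ' : EuclideanSpace ℝ (Fin d),
      -(LOS * ‖θ - θ'‖ ^ 2) ≤ ⟪θ - θ', grad U θ - grad U θ'⟫ := by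
  -- basic positivity facts
  have hρ2 : (0:ℝ) ≤ (ρ:ℝ) - 2 := by
    have : (2:ℝ) ≤ (ρ:ℝ) := by exact_mod_cast hρ
    linarith
  have hrpos : 0 < r := lt_of_le_of_lt hrbar0 hrbar1
  have hne : Nonempty (Fin d) := ⟨⟨0, hd⟩⟩
  have hMbdd : BddAbove (Set.range fun i : Fin d => ‖hessComp U i 0‖) :=
    (Set.finite_range _).bddAbove
  have hGbdd : BddAbove (Set.range fun i : Fin d => ‖gradComp U i 0‖) :=
    (Set.finite_range _).bddAbove
  set M : ℝ := max L (⨆ i : Fin d, ‖hessComp U i 0‖) with hM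
  have hMpos : 0 < M := lt_of_lt_of_le hL (le_max_left _ _)
  have hK0pos : 0 < K0 := by
    rw [hK0]; exact mul_pos (Real.rpow_pos_of_pos (by norm_num) _) hMpos
  have hK1pos : 0 < K1 := lt_of_lt_of_le hK0pos (hK1 ▸ le_max_left _ _)
  have hbapos : 0 < b / a := div_pos hb ha
  have hROSpos : 0 < ROS := by
    rw [hROS]; exact Real.rpow_pos_of_pos hbapos _
  set R : ℝ := 2 * ROS with hR
  have hRpos : 0 < R := by positivity
  have hLOSpos : 0 < LOS := by
    rw [hLOS]
    have h1 : (0:ℝ) < Real.sqrt d := Real.sqrt_pos.mpr (by exact_mod_cast hd)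
    have h2 : (0:ℝ) < (1 + 2 * ROS) ^ ((ρ:ℝ) + q - 1) :=
      Real.rpow_pos_of_pos (by linarith) _
    positivity
  -- smoothness
  have hgsm : ContDiff ℝ 2 (fun x => gradient U x) := by
    have h1 : ContDiff ℝ 2 (fderiv ℝ U) := hU.fderiv_right (by norm_num)
    exact ((InnerProductSpace.toDual ℝ (EuclideanSpace ℝ (Fin d))).symm.contDiff).comp h1
  have hgdiff : ∀ x, DifferentiableAt ℝ (fun y => gradient U y) x := fun x =>
    (hgsm.differentiable (by norm_num)).differentiableAt
  have hgism : ∀ i : Fin d, ContDiff ℝ 2 (fun y => gradient U y i) := fun i => by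
    have h := (EuclideanSpace.proj (𝕜 := ℝ) i).contDiff.comp hgsm
    exact h
  have hgcsm : ∀ i : Fin d, ContDiff ℝ 1 (fun x => gradComp U i x) := fun i => by
    have h1 : ContDiff ℝ 1 (fderiv ℝ (fun y => gradient U y i)) :=
      (hgism i).fderiv_right (by norm_num)
    exact ((InnerProductSpace.toDual ℝ (EuclideanSpace ℝ (Fin d))).symm.contDiff).comp h1
  have hgcdiff : ∀ (i : Fin d) x, DifferentiableAt ℝ (fun y => gradComp U i y) x := fun i x =>
    ((hgcsm i).differentiable (by norm_num)).differentiableAt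
  -- pointwise bound on hessComp
  have hessComp_bound : ∀ (i : Fin d) (x : EuclideanSpace ℝ (Fin d)),
      ‖hessComp U i x‖ ≤ K0 * (1 + ‖x‖) ^ ((ρ:ℝ) + q - 2) := by
    intro i x
    have h1 := hALL1 i x 0
    simp only [norm_zero, add_zero, sub_zero] at h1
    have h0 : ‖hessComp U i 0‖ ≤ M := le_trans (le_ciSup hMbdd i) (le_max_right _ _)
    have hcs : ‖hessComp U i x‖ ≤ ‖hessComp U i 0‖ + ‖hessComp U i x - hessComp U i 0‖ := by
      have := norm_sub_norm_le (hessComp U i x) (hessComp U i 0)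
      linarith [le_abs_self (‖hessComp U i x‖ - ‖hessComp U i 0‖)]
    have hxnn : (0:ℝ) ≤ ‖x‖ := norm_nonneg x
    have hb1 : (1:ℝ) ≤ 1 + ‖x‖ := by linarith
    have hb0 : (0:ℝ) < 1 + ‖x‖ := by linarith
    have hpow1 : (1:ℝ) ≤ (1 + ‖x‖) ^ ((ρ:ℝ) - 2) := Real.one_le_rpow hb1 hρ2
    have hLM : L ≤ M := le_max_left _ _
    have hxq : ‖x‖ ^ q ≤ (1 + ‖x‖) ^ q :=
      Real.rpow_le_rpow hxnn (by linarith) hq0.le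
    have key : ‖hessComp U i x‖ ≤ M * (1 + (1 + ‖x‖) ^ ((ρ:ℝ) - 2) * ‖x‖ ^ q) := by
      have h2 : L * (1 + ‖x‖) ^ ((ρ:ℝ) - 2) * ‖x‖ ^ q
          ≤ M * ((1 + ‖x‖) ^ ((ρ:ℝ) - 2) * ‖x‖ ^ q) := by
        rw [← mul_assoc]
        apply mul_le_mul_of_nonneg_right _ (Real.rpow_nonneg hxnn q)
        exact mul_le_mul_of_nonneg_right hLM (Real.rpow_nonneg hb0.le _)
      calc ‖hessComp U i x‖ ≤ ‖hessComp U i 0‖ + ‖hessComp U i x - hessComp U i 0‖ := hcs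
        _ ≤ M + M * ((1 + ‖x‖) ^ ((ρ:ℝ) - 2) * ‖x‖ ^ q) := add_le_add h0 (le_trans h1 h2)
        _ = M * (1 + (1 + ‖x‖) ^ ((ρ:ℝ) - 2) * ‖x‖ ^ q) := by ring
    have key2 : 1 + (1 + ‖x‖) ^ ((ρ:ℝ) - 2) * ‖x‖ ^ q
        ≤ (1 + ‖x‖) ^ ((ρ:ℝ) - 2) * (1 + ‖x‖ ^ q) := by
      have : (1:ℝ) * 1 ≤ (1 + ‖x‖) ^ ((ρ:ℝ) - 2) * 1 := by
        simpa using hpow1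
      nlinarith [Real.rpow_nonneg hxnn q, Real.rpow_nonneg hb0.le ((ρ:ℝ) - 2)]
    have key3 : 1 + ‖x‖ ^ q ≤ 2 ^ ((1:ℝ) - q) * (1 + ‖x‖) ^ q :=
      concave_rpow_aux hq0 hq1 hxnn
    have hfin : ‖hessComp U i x‖
        ≤ M * ((1 + ‖x‖) ^ ((ρ:ℝ) - 2) * (2 ^ ((1:ℝ) - q) * (1 + ‖x‖) ^ q)) := by
      refine le_trans key (mul_le_mul_of_nonneg_left ?_ hMpos.le)
      refine le_trans key2 ?_
      exact mul_le_mul_of_nonneg_left key3 (Real.rpow_nonneg hb0.le _)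
    calc ‖hessComp U i x‖
        ≤ M * ((1 + ‖x‖) ^ ((ρ:ℝ) - 2) * (2 ^ ((1:ℝ) - q) * (1 + ‖x‖) ^ q)) := hfin
      _ = K0 * ((1 + ‖x‖) ^ ((ρ:ℝ) - 2) * (1 + ‖x‖) ^ q) := by rw [hK0]; ring
      _ = K0 * (1 + ‖x‖) ^ ((ρ:ℝ) + q - 2) := by
          rw [← Real.rpow_add hb0]; ring_nf
  -- bound on hessComp on the closed ball of radius R
  have hRb1 : (0:ℝ) < 1 + R := by linarith
  have hρq2 : (0:ℝ) ≤ (ρ:ℝ) + q - 2 := by linarith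
  have hessComp_ball : ∀ (i : Fin d) (x : EuclideanSpace ℝ (Fin d)),
      x ∈ Metric.closedBall (0 : EuclideanSpace ℝ (Fin d)) R →
      ‖hessComp U i x‖ ≤ K0 * (1 + R) ^ ((ρ:ℝ) + q - 2) := by
    intro i x hx
    rw [Metric.mem_closedBall, dist_zero_right] at hx
    refine le_trans (hessComp_bound i x) ?_
    apply mul_le_mul_of_nonneg_left _ hK0pos.le
    exact Real.rpow_le_rpow (by positivity) (by linarith) hρq2
  -- bound on gradComp on the closed ball of radius R
  have hfderiv_gc : ∀ (i : Fin d) (x : EuclideanSpace ℝ (Fin d)),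
      fderiv ℝ (fun y => gradComp U i y) x = hessComp U i x := fun i x => rfl
  have gradComp_ball : ∀ (i : Fin d) (x : EuclideanSpace ℝ (Fin d)), ‖x‖ ≤ R →
      ‖gradComp U i x‖ ≤ K1 * (1 + R) ^ ((ρ:ℝ) + q - 1) := by
    intro i x hx
    have hx' : x ∈ Metric.closedBall (0 : EuclideanSpace ℝ (Fin d)) R := by
      rw [Metric.mem_closedBall, dist_zero_right]; exact hx
    have h0' : (0 : EuclideanSpace ℝ (Fin d)) ∈ Metric.closedBall (0 : EuclideanSpace ℝ (Fin d)) R := by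
      simp [hRpos.le]
    have hlip := (convex_closedBall (0 : EuclideanSpace ℝ (Fin d)) R).norm_image_sub_le_of_norm_fderiv_le
      (fun y _ => hgcdiff i y)
      (fun y hy => by rw [hfderiv_gc]; exact hessComp_ball i y hy) h0' hx'
    simp only [sub_zero] at hlip
    have hg0 : ‖gradComp U i 0‖ ≤ K1 := by
      rw [hK1]; exact le_trans (le_ciSup hGbdd i) (le_max_right _ _)
    have hK0K1 : K0 ≤ K1 := hK1 ▸ le_max_left _ _
    have hcs : ‖gradComp U i x‖ ≤ ‖gradComp U i 0‖ + ‖gradComp U i x - gradComp U i 0‖ := by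
      have := norm_sub_norm_le (gradComp U i x) (gradComp U i 0)
      linarith [le_abs_self (‖gradComp U i x‖ - ‖gradComp U i 0‖)]
    have hpow1 : (1:ℝ) ≤ (1 + R) ^ ((ρ:ℝ) + q - 2) := Real.one_le_rpow (by linarith) hρq2
    have hpownn : (0:ℝ) ≤ (1 + R) ^ ((ρ:ℝ) + q - 2) := by linarith
    calc ‖gradComp U i x‖ ≤ ‖gradComp U i 0‖ + ‖gradComp U i x - gradComp U i 0‖ := hcs
      _ ≤ K1 + K0 * (1 + R) ^ ((ρ:ℝ) + q - 2) * ‖x‖ := add_le_add hg0 hlip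
      _ ≤ K1 + K1 * (1 + R) ^ ((ρ:ℝ) + q - 2) * R := by
          have h5 : K0 * (1 + R) ^ ((ρ:ℝ) + q - 2) * ‖x‖
              ≤ K1 * (1 + R) ^ ((ρ:ℝ) + q - 2) * R := by
            apply mul_le_mul (mul_le_mul_of_nonneg_right hK0K1 hpownn) hx (norm_nonneg x)
            positivity
          linarith
      _ ≤ K1 * (1 + R) ^ ((ρ:ℝ) + q - 2) * (1 + R) := by
          have h6 := mul_le_mul_of_nonneg_left hpow1 hK1pos.le
          nlinarith
      _ = K1 * (1 + R) ^ ((ρ:ℝ) + q - 1) := by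
          have he : ((ρ:ℝ) + q - 2) + 1 = (ρ:ℝ) + q - 1 := by ring
          rw [← he, Real.rpow_add_one hRb1.ne', mul_assoc]
  -- coordinate identity for the Hessian
  have hess_coord : ∀ (x v : EuclideanSpace ℝ (Fin d)) (i : Fin d),
      (hess U x v) i = ⟪gradComp U i x, v⟫ := by
    intro x v i
    have hdf : HasFDerivAt (fun y => gradient U y)
        (fderiv ℝ (fun y => gradient U y) x) x := (hgdiff x).hasFDerivAt
    have hcomp : HasFDerivAt (fun y => gradient U y i)
        ((EuclideanSpace.proj (𝕜 := ℝ) i).comp (fderiv ℝ (fun y => gradient U y) x)) x :=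
      (EuclideanSpace.proj (𝕜 := ℝ) i).hasFDerivAt.comp x hdf
    have hfd : fderiv ℝ (fun y => gradient U y i) x
        = (EuclideanSpace.proj (𝕜 := ℝ) i).comp (fderiv ℝ (fun y => gradient U y) x) :=
      hcomp.fderiv
    have hgc : ⟪gradComp U i x, v⟫ = fderiv ℝ (fun y => gradient U y i) x v :=
      InnerProductSpace.toDual_symm_apply
    rw [hgc, hfd]
    rfl
  -- operator norm bound on the Hessian on the ball
  have hC1 : (0:ℝ) ≤ K1 * (1 + R) ^ ((ρ:ℝ) + q - 1) := by positivity
  have hsd : (0:ℝ) ≤ Real.sqrt d := Real.sqrt_nonneg _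
  have hess_ball : ∀ x : EuclideanSpace ℝ (Fin d), ‖x‖ ≤ R → ‖hess U x‖ ≤ LOS := by
    intro x hx
    rw [hLOS]
    have hLOS' : Real.sqrt d * K1 * (1 + 2 * ROS) ^ ((ρ:ℝ) + q - 1)
        = Real.sqrt d * (K1 * (1 + R) ^ ((ρ:ℝ) + q - 1)) := by rw [hR]; ring
    rw [hLOS']
    apply ContinuousLinearMap.opNorm_le_bound _ (by positivity)
    intro v
    have hcoord : ∀ i : Fin d, ‖(hess U x v) i‖ ≤ (K1 * (1 + R) ^ ((ρ:ℝ) + q - 1)) * ‖v‖ := by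
      intro i
      rw [hess_coord x v i, Real.norm_eq_abs]
      refine le_trans (abs_real_inner_le_norm _ _) ?_
      exact mul_le_mul_of_nonneg_right (gradComp_ball i x hx) (norm_nonneg v)
    have hnorm : ‖hess U x v‖ = Real.sqrt (∑ i, ‖(hess U x v) i‖ ^ 2) :=
      EuclideanSpace.norm_eq _
    rw [hnorm]
    have hsum : (∑ i, ‖(hess U x v) i‖ ^ 2)
        ≤ (d : ℝ) * ((K1 * (1 + R) ^ ((ρ:ℝ) + q - 1)) * ‖v‖) ^ 2 := by
      calc (∑ i, ‖(hess U x v) i‖ ^ 2)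
          ≤ ∑ _i : Fin d, ((K1 * (1 + R) ^ ((ρ:ℝ) + q - 1)) * ‖v‖) ^ 2 := by
            apply Finset.sum_le_sum
            intro i _
            exact pow_le_pow_left₀ (norm_nonneg _) (hcoord i) 2
        _ = (d : ℝ) * ((K1 * (1 + R) ^ ((ρ:ℝ) + q - 1)) * ‖v‖) ^ 2 := by
            rw [Finset.sum_const, Finset.card_univ, Fintype.card_fin, nsmul_eq_mul]
    refine le_trans (Real.sqrt_le_sqrt hsum) ?_
    rw [Real.sqrt_mul (Nat.cast_nonneg d), Real.sqrt_sq (by positivity)]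
    exact le_of_eq (by ring)
  -- Lipschitz bound for the gradient on the ball
  have hfderiv_g : ∀ x : EuclideanSpace ℝ (Fin d),
      fderiv ℝ (fun y => gradient U y) x = hess U x := fun x => rfl
  have grad_lip : ∀ x y : EuclideanSpace ℝ (Fin d), ‖x‖ ≤ R → ‖y‖ ≤ R →
      ‖grad U x - grad U y‖ ≤ LOS * ‖x - y‖ := by
    intro x y hx hy
    have h := (convex_closedBall (0 : EuclideanSpace ℝ (Fin d)) R).norm_image_sub_le_of_norm_fderiv_le
      (fun z _ => hgdiff z)
      (fun z hz => by
        rw [hfderiv_g]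
        exact hess_ball z (by rwa [Metric.mem_closedBall, dist_zero_right] at hz))
      (show y ∈ Metric.closedBall (0 : EuclideanSpace ℝ (Fin d)) R by
        rw [Metric.mem_closedBall, dist_zero_right]; exact hy)
      (show x ∈ Metric.closedBall (0 : EuclideanSpace ℝ (Fin d)) R by
        rw [Metric.mem_closedBall, dist_zero_right]; exact hx)
    exact h
  -- AC positivity outside radius ROS
  have hROSr : ROS ^ (r - rbar) = b / a := by
    rw [hROS, ← Real.rpow_mul hbapos.le, one_div,
      inv_mul_cancel₀ (sub_ne_zero.mpr (ne_of_gt hrbar1)), Real.rpow_one]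
  have hterm : ∀ x : ℝ, ROS ≤ x → b * x ^ rbar ≤ a * x ^ r := by
    intro x hxx
    have hx0 : 0 < x := lt_of_lt_of_le hROSpos hxx
    have h1 : ROS ^ (r - rbar) ≤ x ^ (r - rbar) :=
      Real.rpow_le_rpow hROSpos.le hxx (by linarith)
    rw [hROSr] at h1
    have h2 : x ^ r = x ^ rbar * x ^ (r - rbar) := by
      rw [← Real.rpow_add hx0]; ring_nf
    have h3 : (0:ℝ) < x ^ rbar := Real.rpow_pos_of_pos hx0 _
    have h5 := mul_le_mul_of_nonneg_left h1 (mul_pos ha h3).le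
    calc b * x ^ rbar = a * x ^ rbar * (b / a) := by field_simp
      _ ≤ a * x ^ rbar * (x ^ (r - rbar)) := h5
      _ = a * x ^ r := by rw [h2]; ring
  have hpos : ∀ u w : EuclideanSpace ℝ (Fin d), ROS ≤ ‖u‖ → ROS ≤ ‖w‖ →
      0 ≤ ⟪u - w, grad U u - grad U w⟫ := by
    intro u w hu hw
    refine le_trans ?_ (hAC u w)
    have h1 := hterm _ hu
    have h2 := hterm _ hw
    have hnn : (0:ℝ) ≤ ‖u - w‖ ^ 2 := sq_nonneg _
    have h3 : (0:ℝ) ≤ a * (‖u‖ ^ r + ‖w‖ ^ r) - b * (‖u‖ ^ rbar + ‖w‖ ^ rbar) := by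
      linarith
    nlinarith [mul_nonneg hnn h3]
  have hRle : ROS ≤ R := by rw [hR]; linarith
  -- main claim, assuming WLOG ‖w‖ ≤ ‖u‖
  have key : ∀ u w : EuclideanSpace ℝ (Fin d), ‖w‖ ≤ ‖u‖ →
      -(LOS * ‖u - w‖ ^ 2) ≤ ⟪u - w, grad U u - grad U w⟫ := by
    intro u w hle
    by_cases hcase : ‖u‖ ≤ R
    · -- both in the ball: use the Lipschitz bound
      have h1 := grad_lip u w hcase (le_trans hle hcase)
      have h2 := abs_real_inner_le_norm (u - w) (grad U u - grad U w)
      have h3 := neg_abs_le ⟪u - w, grad U u - grad U w⟫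
      have h4 : ‖u - w‖ * ‖grad U u - grad U w‖ ≤ LOS * ‖u - w‖ ^ 2 := by
        nlinarith [mul_le_mul_of_nonneg_left h1 (norm_nonneg (u - w)), norm_nonneg (u - w)]
      linarith
    · push_neg at hcase
      by_cases h2 : ROS ≤ ‖w‖
      · -- both outside radius ROS
        have hp := hpos u w (le_trans hRle hcase.le) h2
        have hnn : (0:ℝ) ≤ LOS * ‖u - w‖ ^ 2 := by positivity
        linarith
      · push_neg at h2
        -- crossing argument
        set f : ℝ → ℝ := fun s => ‖w + s • (u - w)‖ with hf
        have hfc : Continuous f :=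
          (continuous_const.add (continuous_id.smul continuous_const)).norm
        have hf0 : f 0 = ‖w‖ := by simp [hf]
        have hf1 : f 1 = ‖u‖ := by simp [hf]
        have hROSR : ROS < R := by rw [hR]; linarith
        have hmem : R ∈ Set.Icc (f 0) (f 1) := by
          rw [hf0, hf1]; exact ⟨by linarith, hcase.le⟩
        obtain ⟨s, hsI, hsR⟩ :=
          intermediate_value_Icc (by norm_num : (0:ℝ) ≤ 1) hfc.continuousOn hmem
        set z := w + s • (u - w) with hz
        have hzn : ‖z‖ = R := hsR
        have hs0 : s ≠ 0 := by
          intro h; rw [h] at hsR; rw [hf0] at hsR; linarith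
        have hs1 : s ≠ 1 := by
          intro h; rw [h] at hsR; rw [hf1] at hsR; linarith
        have hs0' : 0 < s := lt_of_le_of_ne hsI.1 (Ne.symm hs0)
        have hs1' : s < 1 := lt_of_le_of_ne hsI.2 hs1
        have huz : u - z = (1 - s) • (u - w) := by
          rw [hz]; module
        have hzw : z - w = s • (u - w) := by
          rw [hz]; module
        have hsplit : ⟪u - w, grad U u - grad U w⟫
            = ⟪u - w, grad U u - grad U z⟫ + ⟪u - w, grad U z - grad U w⟫ := by
          rw [← inner_add_right]
          congr 1
          abel
        have ht1 : 0 ≤ ⟪u - w, grad U u - grad U z⟫ := by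
          have hzROS : ROS ≤ ‖z‖ := by rw [hzn]; exact hRle
          have hp := hpos u z (le_trans hRle hcase.le) hzROS
          have hsm : ⟪u - z, grad U u - grad U z⟫
              = (1 - s) * ⟪u - w, grad U u - grad U z⟫ := by
            rw [huz, real_inner_smul_left]
          rw [hsm] at hp
          exact (mul_nonneg_iff_of_pos_left (by linarith : (0:ℝ) < 1 - s)).mp hp
        have ht2 : -(LOS * ‖u - w‖ ^ 2) ≤ ⟪u - w, grad U z - grad U w⟫ := by
          have hlz : ‖grad U z - grad U w‖ ≤ LOS * ‖z - w‖ :=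
            grad_lip z w (le_of_eq hzn) (by linarith)
          have hzw' : ‖z - w‖ = s * ‖u - w‖ := by
            rw [hzw, norm_smul, Real.norm_eq_abs, abs_of_pos hs0']
          rw [hzw'] at hlz
          have habs := abs_real_inner_le_norm (u - w) (grad U z - grad U w)
          have hneg := neg_abs_le ⟪u - w, grad U z - grad U w⟫
          have hmain : ‖u - w‖ * ‖grad U z - grad U w‖ ≤ LOS * ‖u - w‖ ^ 2 := by
            nlinarith [mul_le_mul_of_nonneg_left hlz (norm_nonneg (u - w)),
              mul_nonneg (mul_nonneg hLOSpos.le (by linarith : (0:ℝ) ≤ 1 - s))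
                (sq_nonneg ‖u - w‖)]
          linarith
        rw [hsplit]
        linarith
  -- conclude by symmetry
  intro θ θ'
  rcases le_total ‖θ'‖ ‖θ‖ with hle | hle
  · exact key θ θ' hle
  · have h := key θ' θ hle
    have e1 : θ' - θ = -(θ - θ') := by abel
    have e2 : grad U θ' - grad U θ = -(grad U θ - grad U θ') := by abel
    rw [e1, e2, inner_neg_neg, norm_neg] at h
    exact h
end
end

section
/- Let d ≥ 1, β > 0, a, b > 0, and let h : ℝ^d → ℝ^d satisfy the dissipativity condition ⟨θ, h(θ)⟩ ≥ a|θ|² − b for all θ ∈ ℝ^d. For an integer p ≥ 2 define V_p(θ) := (1+|θ|²)^{p/2} and set M := (1/3 + 4b/(3a) + 4d/(3aβ) + 4(p−2)/(3aβ))^{1/2}. Then for all θ ∈ ℝ^d: ΔV_p(θ)/β − ⟨∇V_p(θ), h(θ)⟩ ≤ −(a p/4) V_p(θ) + (3 a p/4)(1 + M²)^{p/2}, where ΔV_p and ∇V_p denote the Laplacian and gradient of V_p. -/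
open MeasureTheory ProbabilityTheory Real
open scoped RealInnerProductSpace ENNReal NNReal BigOperators

noncomputable section

/-- The Laplacian of a scalar function on `ℝ^d`: `Δf(θ) = ∑_j ∂²_{θ^{(j)}} f(θ)`. -/
def lapl {d : ℕ} (f : EuclideanSpace ℝ (Fin d) → ℝ) (θ : EuclideanSpace ℝ (Fin d)) : ℝ :=
  ∑ j, fderiv ℝ (fun x => fderiv ℝ f x (EuclideanSpace.single j 1)) θ
    (EuclideanSpace.single j 1)

/-- The Lyapunov function `V_p(θ) = (1 + |θ|²)^{p/2}`. -/
def lyapV {d : ℕ} (p : ℕ) (θ : EuclideanSpace ℝ (Fin d)) : ℝ :=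
  (1 + ‖θ‖ ^ 2) ^ ((p : ℝ) / 2)

lemma base_pos {d : ℕ} (θ : EuclideanSpace ℝ (Fin d)) : (0:ℝ) < 1 + ‖θ‖ ^ 2 := by positivity

lemma hasFDerivAt_base {d : ℕ} (θ : EuclideanSpace ℝ (Fin d)) :
    HasFDerivAt (fun x : EuclideanSpace ℝ (Fin d) => 1 + ‖x‖ ^ 2)
      ((2:ℝ) • innerSL ℝ θ) θ := by
  have := (hasFDerivAt_const (1:ℝ) θ).add (hasStrictFDerivAt_norm_sq θ).hasFDerivAt
  rw [zero_add] at this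
  refine this.congr_fderiv ?_
  ext v
  simp

lemma hasFDerivAt_base_rpow {d : ℕ} (q : ℝ) (θ : EuclideanSpace ℝ (Fin d)) :
    HasFDerivAt (fun x : EuclideanSpace ℝ (Fin d) => (1 + ‖x‖ ^ 2) ^ q)
      (((2 * q) * (1 + ‖θ‖ ^ 2) ^ (q - 1)) • innerSL ℝ θ) θ := by
  have := (hasFDerivAt_base θ).rpow_const (p := q) (Or.inl (base_pos θ).ne')
  refine this.congr_fderiv ?_
  rw [smul_smul]
  congr 1
  ring

lemma lyapV_hasFDerivAt {d : ℕ} (p : ℕ) (θ : EuclideanSpace ℝ (Fin d)) :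
    HasFDerivAt (lyapV p)
      (((p:ℝ) * (1 + ‖θ‖ ^ 2) ^ ((p:ℝ)/2 - 1)) • innerSL ℝ θ) θ := by
  have := hasFDerivAt_base_rpow (d := d) ((p:ℝ)/2) θ
  refine this.congr_fderiv ?_
  congr 1
  ring

lemma lyapV_gradient {d : ℕ} (p : ℕ) (θ : EuclideanSpace ℝ (Fin d)) :
    gradient (lyapV p) θ = ((p:ℝ) * (1 + ‖θ‖ ^ 2) ^ ((p:ℝ)/2 - 1)) • θ := by
  have hg : HasGradientAt (lyapV p) (((p:ℝ) * (1 + ‖θ‖ ^ 2) ^ ((p:ℝ)/2 - 1)) • θ) θ := by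
    rw [hasGradientAt_iff_hasFDerivAt]
    refine (lyapV_hasFDerivAt p θ).congr_fderiv ?_
    ext v
    simp [real_inner_smul_left]
  exact hg.gradient

lemma fderiv_lyapV_eq {d : ℕ} (p : ℕ) (x : EuclideanSpace ℝ (Fin d))
    (e : EuclideanSpace ℝ (Fin d)) :
    fderiv ℝ (lyapV p) x e = ((p:ℝ) * (1 + ‖x‖ ^ 2) ^ ((p:ℝ)/2 - 1)) * ⟪x, e⟫ := by
  rw [(lyapV_hasFDerivAt p x).fderiv]
  simp

lemma inner_right_hasFDerivAt {d : ℕ} (e θ : EuclideanSpace ℝ (Fin d)) :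
    HasFDerivAt (fun x : EuclideanSpace ℝ (Fin d) => ⟪x, e⟫) (innerSL ℝ e) θ := by
  have heq : (fun x : EuclideanSpace ℝ (Fin d) => ⟪x, e⟫) = innerSL ℝ e := by
    funext x
    simp only [innerSL_apply_apply]
    exact real_inner_comm e x
  rw [heq]
  exact (innerSL ℝ e).hasFDerivAt

lemma lyapV_second {d : ℕ} (p : ℕ) (θ e : EuclideanSpace ℝ (Fin d)) :
    fderiv ℝ (fun x => fderiv ℝ (lyapV p) x e) θ e
      = (p:ℝ) * ((p:ℝ) - 2) * (1 + ‖θ‖ ^ 2) ^ ((p:ℝ)/2 - 2) * ⟪θ, e⟫ ^ 2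
        + (p:ℝ) * (1 + ‖θ‖ ^ 2) ^ ((p:ℝ)/2 - 1) * ‖e‖ ^ 2 := by
  have heq : (fun x : EuclideanSpace ℝ (Fin d) => fderiv ℝ (lyapV p) x e)
      = fun x => ((p:ℝ) * (1 + ‖x‖ ^ 2) ^ ((p:ℝ)/2 - 1)) * ⟪x, e⟫ :=
    funext fun x => fderiv_lyapV_eq p x e
  rw [heq]
  have h1 : HasFDerivAt (fun x : EuclideanSpace ℝ (Fin d) =>
      (p:ℝ) * (1 + ‖x‖ ^ 2) ^ ((p:ℝ)/2 - 1))
      ((p:ℝ) • (((2 * ((p:ℝ)/2 - 1)) * (1 + ‖θ‖ ^ 2) ^ (((p:ℝ)/2 - 1) - 1)) • innerSL ℝ θ)) θ :=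
    (hasFDerivAt_base_rpow ((p:ℝ)/2 - 1) θ).const_mul _
  have h2 := inner_right_hasFDerivAt e θ
  have h3 : fderiv ℝ (fun x : EuclideanSpace ℝ (Fin d) =>
      ((p:ℝ) * (1 + ‖x‖ ^ 2) ^ ((p:ℝ)/2 - 1)) * ⟪x, e⟫) θ = _ := (h1.mul h2).fderiv
  rw [h3]
  simp only [ContinuousLinearMap.add_apply, ContinuousLinearMap.smul_apply, innerSL_apply_apply,
    smul_eq_mul]
  rw [real_inner_self_eq_norm_sq]
  rw [show ((p:ℝ)/2 - 1) - 1 = (p:ℝ)/2 - 2 by ring]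
  ring

lemma sum_sq_eq_norm_sq {d : ℕ} (θ : EuclideanSpace ℝ (Fin d)) :
    ∑ j, θ j ^ 2 = ‖θ‖ ^ 2 := by
  rw [EuclideanSpace.norm_eq, Real.sq_sqrt (by positivity)]
  simp

lemma lyapV_lapl {d : ℕ} (p : ℕ) (θ : EuclideanSpace ℝ (Fin d)) :
    lapl (lyapV p) θ
      = (p:ℝ) * ((p:ℝ) - 2) * (1 + ‖θ‖ ^ 2) ^ ((p:ℝ)/2 - 2) * ‖θ‖ ^ 2
        + (d:ℝ) * ((p:ℝ) * (1 + ‖θ‖ ^ 2) ^ ((p:ℝ)/2 - 1)) := by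
  unfold lapl
  have : ∀ j : Fin d,
      fderiv ℝ (fun x => fderiv ℝ (lyapV p) x (EuclideanSpace.single j 1)) θ
        (EuclideanSpace.single j 1)
      = (p:ℝ) * ((p:ℝ) - 2) * (1 + ‖θ‖ ^ 2) ^ ((p:ℝ)/2 - 2) * (θ j) ^ 2
        + (p:ℝ) * (1 + ‖θ‖ ^ 2) ^ ((p:ℝ)/2 - 1) := by
    intro j
    rw [lyapV_second p θ (EuclideanSpace.single j 1)]
    rw [EuclideanSpace.inner_single_right, EuclideanSpace.norm_single]
    simp
  rw [Finset.sum_congr rfl fun j _ => this j, Finset.sum_add_distrib,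
    ← Finset.mul_sum, sum_sq_eq_norm_sq, Finset.sum_const]
  simp [Finset.card_univ, mul_comm]

lemma rpow_sub_one_mul {x : ℝ} (hx : x ≠ 0) (q : ℝ) : x ^ (q - 1) * x = x ^ q := by
  rw [← Real.rpow_add_one hx]
  congr 1
  ring

/-- Lemma `lem:driftcon` of the paper, cf. Lemma 3.5 of
Chau–Moulines–Rásonyi–Sabanis–Zhang: drift condition for the Lyapunov function `V_p`
under dissipativity of `h`. -/
theorem lyapunov_drift_condition
    (d : ℕ) (hd : 1 ≤ d) (β : ℝ) (hβ : 0 < β)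
    (a b : ℝ) (ha : 0 < a) (hb : 0 < b)
    (h : EuclideanSpace ℝ (Fin d) → EuclideanSpace ℝ (Fin d))
    (hdiss : ∀ θ : EuclideanSpace ℝ (Fin d), a * ‖θ‖ ^ 2 - b ≤ ⟪θ, h θ⟫)
    (p : ℕ) (hp : 2 ≤ p)
    (M : ℝ)
    (hM : M = (1 / 3 + 4 * b / (3 * a) + 4 * d / (3 * a * β)
        + 4 * ((p : ℝ) - 2) / (3 * a * β)) ^ ((1 : ℝ) / 2)) :
    ∀ θ : EuclideanSpace ℝ (Fin d),
      lapl (lyapV p) θ / β - ⟪gradient (lyapV p) θ, h θ⟫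
        ≤ -(a * p / 4) * lyapV p θ + (3 * a * p / 4) * (1 + M ^ 2) ^ ((p : ℝ) / 2) := by
  intro θ
  have hp2 : (2:ℝ) ≤ (p:ℝ) := by exact_mod_cast hp
  obtain ⟨G, hGdef⟩ : ∃ G : ℝ, G = 1 + ‖θ‖ ^ 2 := ⟨_, rfl⟩
  have hG1 : 1 ≤ G := by rw [hGdef]; nlinarith [sq_nonneg ‖θ‖]
  have hGpos : 0 < G := by linarith
  obtain ⟨A, hAdef⟩ : ∃ A : ℝ, A = G ^ ((p:ℝ)/2 - 1) := ⟨_, rfl⟩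
  have hApos : 0 < A := hAdef ▸ Real.rpow_pos_of_pos hGpos _
  have hB : lyapV p θ = A * G := by
    rw [lyapV, ← hGdef, hAdef, rpow_sub_one_mul hGpos.ne']
  have hθsq : ‖θ‖ ^ 2 = G - 1 := by rw [hGdef]; ring
  -- Laplacian bound
  have hA2 : G ^ ((p:ℝ)/2 - 2) * ‖θ‖ ^ 2 ≤ A := by
    have h1 : G ^ ((p:ℝ)/2 - 2) * ‖θ‖ ^ 2 ≤ G ^ ((p:ℝ)/2 - 2) * G :=
      mul_le_mul_of_nonneg_left (by nlinarith) (Real.rpow_nonneg hGpos.le _)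
    calc G ^ ((p:ℝ)/2 - 2) * ‖θ‖ ^ 2 ≤ G ^ ((p:ℝ)/2 - 2) * G := h1
      _ = A := by
          rw [hAdef, show (p:ℝ)/2 - 1 = ((p:ℝ)/2 - 2) + 1 by ring, Real.rpow_add_one hGpos.ne']
  have hlapl : lapl (lyapV p) θ ≤ (p:ℝ) * (((p:ℝ) - 2) + (d:ℝ)) * A := by
    rw [lyapV_lapl, ← hGdef, ← hAdef]
    have hcoef : 0 ≤ (p:ℝ) * ((p:ℝ) - 2) := by nlinarith
    nlinarith [mul_le_mul_of_nonneg_left hA2 hcoef, hApos]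
  -- gradient term bound
  have hgr : ((p:ℝ) * A) * (a * ‖θ‖ ^ 2 - b) ≤ ⟪gradient (lyapV p) θ, h θ⟫ := by
    rw [lyapV_gradient, real_inner_smul_left, ← hGdef, ← hAdef]
    exact mul_le_mul_of_nonneg_left (hdiss θ) (by positivity)
  -- value of M²
  obtain ⟨S, hSdef⟩ : ∃ S : ℝ, S = 1 / 3 + 4 * b / (3 * a) + 4 * (d:ℝ) / (3 * a * β)
      + 4 * ((p : ℝ) - 2) / (3 * a * β) := ⟨_, rfl⟩
  rw [← hSdef] at hM
  have hS0 : 0 ≤ S := by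
    have h1 : (0:ℝ) ≤ 4 * b / (3 * a) := by positivity
    have h2 : (0:ℝ) ≤ 4 * (d:ℝ) / (3 * a * β) := by positivity
    have h3 : (0:ℝ) ≤ 4 * ((p:ℝ) - 2) / (3 * a * β) :=
      div_nonneg (by linarith) (by positivity)
    rw [hSdef]; linarith
  have hM2 : M ^ 2 = S := by
    rw [hM, ← Real.rpow_natCast (S ^ ((1:ℝ)/2)) 2, ← Real.rpow_mul hS0]
    norm_num
  obtain ⟨K, hKdef⟩ : ∃ K : ℝ, K = 1 + M ^ 2 := ⟨_, rfl⟩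
  have hKval : (3 * a / 4) * K = ((d:ℝ) + ((p:ℝ) - 2)) / β + a + b := by
    rw [hKdef, hM2, hSdef]
    field_simp
    ring
  have hK1 : (1:ℝ) ≤ K := by rw [hKdef]; nlinarith [sq_nonneg M]
  have hKpos : (0:ℝ) < K := by linarith
  obtain ⟨KP, hKPdef⟩ : ∃ KP : ℝ, KP = K ^ ((p:ℝ)/2) := ⟨_, rfl⟩
  -- key elementary inequality
  have hkey : A * (K - G) ≤ KP := by
    rcases le_or_gt K G with hKG | hGK
    · have h1 : A * (K - G) ≤ 0 := mul_nonpos_of_nonneg_of_nonpos hApos.le (by linarith)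
      exact h1.trans (hKPdef ▸ Real.rpow_nonneg hKpos.le _)
    · have hexp : (0:ℝ) ≤ (p:ℝ)/2 - 1 := by linarith
      have h1 : A ≤ K ^ ((p:ℝ)/2 - 1) := hAdef ▸ Real.rpow_le_rpow hGpos.le hGK.le hexp
      calc A * (K - G) ≤ K ^ ((p:ℝ)/2 - 1) * K :=
            mul_le_mul h1 (by linarith) (by linarith) (Real.rpow_nonneg hKpos.le _)
        _ = KP := by rw [hKPdef, rpow_sub_one_mul hKpos.ne']
  -- combine
  have hstep : lapl (lyapV p) θ / β - ⟪gradient (lyapV p) θ, h θ⟫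
      ≤ ((p:ℝ) * (((p:ℝ) - 2) + (d:ℝ)) * A) / β - ((p:ℝ) * A) * (a * ‖θ‖ ^ 2 - b) := by
    have h1 : lapl (lyapV p) θ / β ≤ ((p:ℝ) * (((p:ℝ) - 2) + (d:ℝ)) * A) / β := by gcongr
    linarith [hgr]
  have hfinal : ((p:ℝ) * (((p:ℝ) - 2) + (d:ℝ)) * A) / β - ((p:ℝ) * A) * (a * ‖θ‖ ^ 2 - b)
      ≤ -(a * p / 4) * (A * G) + (3 * a * p / 4) * KP := by
    rw [hθsq]
    have e1 : ((p:ℝ) * (((p:ℝ) - 2) + (d:ℝ)) * A) / β - ((p:ℝ) * A) * (a * (G - 1) - b)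
        = (p:ℝ) * A * (((3 * a / 4) * K) - a * G) := by
      rw [hKval]
      field_simp
      ring
    rw [e1, show (p:ℝ) * A * ((3 * a / 4) * K - a * G)
        = -(a * p / 4) * (A * G) + (3 * a * (p:ℝ) / 4) * (A * (K - G)) by ring]
    have h3 := mul_le_mul_of_nonneg_left hkey (show (0:ℝ) ≤ 3 * a * (p:ℝ) / 4 by positivity)
    linarith
  rw [hB, ← hKdef, ← hKPdef]
  exact hstep.trans hfinal
end
end

section
/- Let d ≥ 1 and let â ∈ ℝ^d with |â| > 1. Define U : ℝ^d → ℝ by U(θ) := (1/2)|θ − â|² − log(1 + exp(−2⟨θ, â⟩)). Then U is three times continuously differentiable and: (i) U satisfies Assumption ALLlip with q = 1, L̄1 = 56|â|⁴, L̄2 = 8|â|³ and L̄3 = 1 + 4|â|²; (ii) U satisfies Assumption ADlip with ā = 1/2 and b̄ = |â|²/2, i.e. ⟨θ, ∇U(θ)⟩ ≥ (1/2)(|θ|² − |â|²) for all θ ∈ ℝ^d. -/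
open MeasureTheory ProbabilityTheory Real
open scoped RealInnerProductSpace ENNReal NNReal BigOperators

noncomputable section

lemma tanh_sq_le_one (x : ℝ) : Real.tanh x ^ 2 ≤ 1 := by
  rw [Real.tanh_eq_sinh_div_cosh, div_pow, div_le_one (by positivity), Real.cosh_sq]
  nlinarith [sq_nonneg (Real.sinh x)]

lemma abs_tanh_le_one (x : ℝ) : |Real.tanh x| ≤ 1 :=
  (sq_le_one_iff_abs_le_one _).mp (tanh_sq_le_one x)

lemma hasDerivAt_tanh (x : ℝ) : HasDerivAt Real.tanh (1 - Real.tanh x ^ 2) x := by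
  have h := (Real.hasDerivAt_sinh x).div (Real.hasDerivAt_cosh x) (Real.cosh_pos x).ne'
  have heq : (Real.cosh x * Real.cosh x - Real.sinh x * Real.sinh x) / Real.cosh x ^ 2
      = 1 - Real.tanh x ^ 2 := by
    rw [Real.tanh_eq_sinh_div_cosh, div_pow]
    have hc := (Real.cosh_pos x).ne'
    field_simp
  rw [heq] at h
  have hfun : (fun y => Real.sinh y / Real.cosh y) = Real.tanh := by
    funext y; rw [Real.tanh_eq_sinh_div_cosh]
  exact h.congr_of_eventuallyEq (Filter.Eventually.of_forall fun y => (congrFun hfun y).symm)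

lemma tanh_lipschitz (x y : ℝ) : |Real.tanh x - Real.tanh y| ≤ |x - y| := by
  have h := Convex.norm_image_sub_le_of_norm_hasDerivWithin_le
    (f := Real.tanh) (f' := fun t => 1 - Real.tanh t ^ 2) (C := 1)
    (fun t _ => (hasDerivAt_tanh t).hasDerivWithinAt)
    (fun t _ => by
      simp only [Real.norm_eq_abs, abs_le]
      constructor <;> nlinarith [tanh_sq_le_one t, sq_nonneg (Real.tanh t)])
    convex_univ (Set.mem_univ y) (Set.mem_univ x)
  simpa [Real.norm_eq_abs] using h

lemma psi_deriv (t : ℝ) :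
    HasDerivAt (fun t : ℝ => Real.log (1 + Real.exp (-(2 * t)))) (Real.tanh t - 1) t := by
  have h1 : HasDerivAt (fun t : ℝ => -(2 * t)) (-2) t := by
    simpa using ((hasDerivAt_id t).const_mul (-2 : ℝ))
  have h2 : HasDerivAt (fun t : ℝ => Real.exp (-(2 * t))) (Real.exp (-(2 * t)) * (-2)) t := h1.exp
  have h3 : HasDerivAt (fun t : ℝ => 1 + Real.exp (-(2 * t))) (Real.exp (-(2 * t)) * (-2)) t :=
    h2.const_add 1
  have hpos : (0:ℝ) < 1 + Real.exp (-(2 * t)) := by positivity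
  have h4 := h3.log hpos.ne'
  have heq : Real.exp (-(2 * t)) * (-2) / (1 + Real.exp (-(2 * t))) = Real.tanh t - 1 := by
    rw [Real.tanh_eq_sinh_div_cosh, Real.sinh_eq, Real.cosh_eq]
    have e2 : Real.exp (-(2 * t)) = Real.exp (-t) * Real.exp (-t) := by
      rw [← Real.exp_add]; ring_nf
    have e3 : Real.exp t * Real.exp (-t) = 1 := by rw [← Real.exp_add]; simp
    have hc : (0:ℝ) < Real.exp t + Real.exp (-t) := by positivity
    rw [e2]
    field_simp
    nlinarith [Real.exp_pos t, Real.exp_pos (-t)]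
  rwa [heq] at h4


variable {d : ℕ}

local notation "E" => EuclideanSpace ℝ (Fin d)

def Uf (a θ : EuclideanSpace ℝ (Fin d)) : ℝ :=
  (1 / 2) * ‖θ - a‖ ^ 2 - Real.log (1 + Real.exp (-(2 * ⟪θ, a⟫)))

def Amap (a : EuclideanSpace ℝ (Fin d)) : E →L[ℝ] E :=
  (innerSL ℝ a).smulRight a

lemma Amap_apply (a v : E) : Amap a v = ⟪a, v⟫ • a := rfl

lemma Amap_norm (a : E) : ‖Amap a‖ ≤ ‖a‖ ^ 2 := by
  refine ContinuousLinearMap.opNorm_le_bound _ (by positivity) fun v => ?_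
  rw [Amap_apply, norm_smul, Real.norm_eq_abs]
  have := abs_real_inner_le_norm a v
  nlinarith [norm_nonneg a, norm_nonneg v, abs_nonneg (⟪a, v⟫)]

lemma hasFDerivAt_Uf (a θ : E) :
    HasFDerivAt (Uf a) (innerSL ℝ (θ - Real.tanh ⟪a, θ⟫ • a)) θ := by
  have hsub : HasFDerivAt (fun x : E => x - a) (ContinuousLinearMap.id ℝ E) θ :=
    (hasFDerivAt_id θ).sub_const a
  have h1 := hsub.inner ℝ hsub
  have h2 := h1.const_mul (1/2 : ℝ)
  have hS : HasFDerivAt (fun x : E => (innerSL ℝ a) x) (innerSL ℝ a) θ :=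
    (innerSL ℝ a).hasFDerivAt
  have h3 : HasFDerivAt (fun x : E => Real.log (1 + Real.exp (-(2 * (innerSL ℝ a) x))))
      ((Real.tanh ⟪a, θ⟫ - 1) • innerSL ℝ a) θ :=
    (psi_deriv ⟪a, θ⟫).comp_hasFDerivAt θ hS
  have h4 := h2.sub h3
  have hfun : Uf a = fun x : E =>
      (1/2 : ℝ) * ⟪x - a, x - a⟫ - Real.log (1 + Real.exp (-(2 * (innerSL ℝ a) x))) := by
    funext x
    rw [Uf, ← real_inner_self_eq_norm_sq, innerSL_apply_apply, real_inner_comm x a]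
  rw [hfun]
  refine h4.congr_fderiv ?_
  ext v
  simp only [innerSL_apply_apply, ContinuousLinearMap.smul_apply, ContinuousLinearMap.sub_apply,
    ContinuousLinearMap.comp_apply, ContinuousLinearMap.prod_apply,
    ContinuousLinearMap.coe_id', id_eq, fderivInnerCLM_apply, smul_eq_mul,
    inner_sub_left, real_inner_smul_left]
  have hvc : (⟪v, θ - a⟫ : ℝ) = ⟪θ, v⟫ - ⟪a, v⟫ := by
    rw [real_inner_comm, inner_sub_left]
  rw [hvc]
  ring

lemma gradUf (a θ : E) : gradient (Uf a) θ = θ - Real.tanh ⟪a, θ⟫ • a := by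
  refine HasGradientAt.gradient ?_
  rw [hasGradientAt_iff_hasFDerivAt]
  have hd : (InnerProductSpace.toDual ℝ E) (θ - Real.tanh ⟪a, θ⟫ • a)
      = innerSL ℝ (θ - Real.tanh ⟪a, θ⟫ • a) := by
    ext v; simp [InnerProductSpace.toDual_apply_apply]
  rw [hd]
  exact hasFDerivAt_Uf a θ

lemma hasFDerivAt_gradUf (a θ : E) :
    HasFDerivAt (fun x : E => x - Real.tanh ⟪a, x⟫ • a)
      (ContinuousLinearMap.id ℝ E - (1 - Real.tanh ⟪a, θ⟫ ^ 2) • Amap a) θ := by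
  have hc : HasFDerivAt (fun x : E => Real.tanh ((innerSL ℝ a) x))
      ((1 - Real.tanh ⟪a, θ⟫ ^ 2) • innerSL ℝ a) θ :=
    (hasDerivAt_tanh _).comp_hasFDerivAt θ (innerSL ℝ a).hasFDerivAt
  have h := (hasFDerivAt_id θ).sub (hc.smul_const a)
  refine h.congr_fderiv ?_
  ext v
  simp [Amap_apply, ContinuousLinearMap.smulRight_apply, smul_smul]

lemma hessEq (a θ : E) :
    hess (Uf a) θ = ContinuousLinearMap.id ℝ E - (1 - Real.tanh ⟪a, θ⟫ ^ 2) • Amap a := by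
  have hfun : (fun x : E => gradient (Uf a) x) = fun x : E => x - Real.tanh ⟪a, x⟫ • a := by
    funext x; exact gradUf a x
  unfold hess
  rw [hfun]
  exact (hasFDerivAt_gradUf a θ).fderiv

lemma gradCompEq (a : E) (i : Fin d) (θ : E) :
    gradComp (Uf a) i θ = EuclideanSpace.single i 1 - ((1 - Real.tanh ⟪a, θ⟫ ^ 2) * a i) • a := by
  unfold gradComp
  have hfun : (fun y : E => gradient (Uf a) y i)
      = fun y : E => (innerSL ℝ (EuclideanSpace.single i (1:ℝ))) y
        - Real.tanh ((innerSL ℝ a) y) * a i := by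
    funext y
    rw [gradUf]
    simp [EuclideanSpace.inner_single_left, PiLp.sub_apply, PiLp.smul_apply, smul_eq_mul]
  rw [hfun]
  refine HasGradientAt.gradient ?_
  rw [hasGradientAt_iff_hasFDerivAt]
  have hc : HasFDerivAt (fun y : E => Real.tanh ((innerSL ℝ a) y))
      ((1 - Real.tanh ⟪a, θ⟫ ^ 2) • innerSL ℝ a) θ :=
    (hasDerivAt_tanh _).comp_hasFDerivAt θ (innerSL ℝ a).hasFDerivAt
  have h := ((innerSL ℝ (EuclideanSpace.single i (1:ℝ))).hasFDerivAt (x := θ)).sub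
    (hc.mul_const (a i))
  refine h.congr_fderiv ?_
  ext v
  simp only [InnerProductSpace.toDual_apply_apply, inner_sub_left, real_inner_smul_left,
    EuclideanSpace.inner_single_left, ContinuousLinearMap.sub_apply,
    ContinuousLinearMap.smul_apply, innerSL_apply_apply, smul_eq_mul, map_one, one_mul]
  ring

lemma hessCompEq (a : E) (i : Fin d) (θ : E) :
    hessComp (Uf a) i θ
      = (2 * Real.tanh ⟪a, θ⟫ * (1 - Real.tanh ⟪a, θ⟫ ^ 2) * a i) • Amap a := by
  unfold hessComp
  have hfun : (fun x : E => gradComp (Uf a) i x)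
      = fun x : E => EuclideanSpace.single i (1:ℝ)
          - ((1 - Real.tanh ((innerSL ℝ a) x) ^ 2) * a i) • a := by
    funext x; exact gradCompEq a i x
  rw [hfun]
  have hc1 := (((hasDerivAt_tanh ⟪a, θ⟫).pow 2).const_sub 1).mul_const (a i)
  have hc2 := hc1.comp_hasFDerivAt θ (innerSL ℝ a).hasFDerivAt
  have h := (hasFDerivAt_const (EuclideanSpace.single i (1:ℝ)) θ).sub (hc2.smul_const a)
  have h' : HasFDerivAt (fun x : E => EuclideanSpace.single i (1:ℝ)
      - ((1 - Real.tanh ((innerSL ℝ a) x) ^ 2) * a i) • a)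
      (0 - ((-((2:ℕ) * Real.tanh ⟪a, θ⟫ ^ (2-1) * (1 - Real.tanh ⟪a, θ⟫ ^ 2)) * a i)
        • innerSL ℝ a).smulRight a) θ := h
  rw [h'.fderiv]
  ext v j
  simp only [ContinuousLinearMap.zero_apply, ContinuousLinearMap.sub_apply,
    ContinuousLinearMap.smulRight_apply, ContinuousLinearMap.smul_apply, innerSL_apply_apply,
    Amap_apply, smul_eq_mul, PiLp.zero_apply, PiLp.sub_apply, PiLp.smul_apply, pow_one,
    Nat.cast_ofNat, zero_sub, PiLp.neg_apply, ContinuousLinearMap.neg_apply]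
  ring

lemma contDiff_Uf (a : E) : ContDiff ℝ 3 (Uf a) := by
  have h2 : ContDiff ℝ 3 fun θ : E => (⟪θ, a⟫ : ℝ) := contDiff_id.inner ℝ contDiff_const
  have h1 : ContDiff ℝ 3 fun θ : E => ‖θ - a‖ ^ 2 :=
    (contDiff_id.sub contDiff_const).norm_sq ℝ
  have h3 : ContDiff ℝ 3 fun θ : E => 1 + Real.exp (-(2 * ⟪θ, a⟫)) :=
    contDiff_const.add (Real.contDiff_exp.comp ((contDiff_const.mul h2).neg))
  have h4 : ContDiff ℝ 3 fun θ : E => Real.log (1 + Real.exp (-(2 * ⟪θ, a⟫))) :=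
    h3.log fun θ => by positivity
  exact (contDiff_const.mul h1).sub h4

lemma abs_coord_le_norm (a : E) (i : Fin d) : |a i| ≤ ‖a‖ := by
  have h := abs_real_inner_le_norm (EuclideanSpace.single i (1:ℝ)) a
  rw [EuclideanSpace.inner_single_left, EuclideanSpace.norm_single] at h
  simpa using h

lemma g_lip (x y : ℝ) :
    |2 * Real.tanh x * (1 - Real.tanh x ^ 2) - 2 * Real.tanh y * (1 - Real.tanh y ^ 2)|
      ≤ 4 * |x - y| := by
  have ht : |Real.tanh x| ≤ 1 := abs_tanh_le_one x
  have hu : |Real.tanh y| ≤ 1 := abs_tanh_le_one y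
  have ht2 : Real.tanh x ^ 2 ≤ 1 := tanh_sq_le_one x
  have hu2 : Real.tanh y ^ 2 ≤ 1 := tanh_sq_le_one y
  have hl : |Real.tanh x - Real.tanh y| ≤ |x - y| := tanh_lipschitz x y
  set t := Real.tanh x
  set u := Real.tanh y
  have h1 : 2 * t * (1 - t ^ 2) - 2 * u * (1 - u ^ 2)
      = (t - u) * (2 - 2 * (t ^ 2 + t * u + u ^ 2)) := by ring
  rw [h1, abs_mul]
  have h2 : |2 - 2 * (t ^ 2 + t * u + u ^ 2)| ≤ 4 := by
    rw [abs_le]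
    constructor <;> nlinarith [sq_nonneg (t + u), sq_nonneg (t - u)]
  calc |t - u| * |2 - 2 * (t ^ 2 + t * u + u ^ 2)| ≤ |x - y| * 4 := by
        exact mul_le_mul hl h2 (abs_nonneg _) (abs_nonneg _)
    _ = 4 * |x - y| := by ring

lemma sq_tanh_lip (x y : ℝ) : |Real.tanh x ^ 2 - Real.tanh y ^ 2| ≤ 2 * |x - y| := by
  have ht : |Real.tanh x| ≤ 1 := abs_tanh_le_one x
  have hu : |Real.tanh y| ≤ 1 := abs_tanh_le_one y
  have hl : |Real.tanh x - Real.tanh y| ≤ |x - y| := tanh_lipschitz x y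
  have h1 : Real.tanh x ^ 2 - Real.tanh y ^ 2
      = (Real.tanh x - Real.tanh y) * (Real.tanh x + Real.tanh y) := by ring
  rw [h1, abs_mul]
  have h2 : |Real.tanh x + Real.tanh y| ≤ 2 := (abs_add_le _ _).trans (by linarith)
  calc |Real.tanh x - Real.tanh y| * |Real.tanh x + Real.tanh y| ≤ |x - y| * 2 :=
        mul_le_mul hl h2 (abs_nonneg _) (abs_nonneg _)
    _ = 2 * |x - y| := by ring

lemma inner_diff_le (a θ θ' : E) : |(⟪a, θ⟫ : ℝ) - ⟪a, θ'⟫| ≤ ‖a‖ * ‖θ - θ'‖ := by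
  have h : (⟪a, θ⟫ : ℝ) - ⟪a, θ'⟫ = ⟪a, θ - θ'⟫ := by rw [inner_sub_right]
  rw [h]
  exact abs_real_inner_le_norm a (θ - θ')

lemma norm_smul_clm (c : ℝ) (T : EuclideanSpace ℝ (Fin d) →L[ℝ] EuclideanSpace ℝ (Fin d)) :
    ‖c • T‖ = |c| * ‖T‖ :=
  (norm_smul c T).trans (by rw [Real.norm_eq_abs])


/-- part of Proposition `prop:example` of the paper: the Gaussian-mixture
potential satisfies Assumptions ALLlip (with `q = 1`, `L̄1 = 56|â|⁴`, `L̄2 = 8|â|³`,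
`L̄3 = 1 + 4|â|²`) and ADlip (with `ā = 1/2`, `b̄ = |â|²/2`). -/
theorem gaussian_mixture_satisfies_assumptions
    (d : ℕ) (hd : 1 ≤ d)
    (ahat : EuclideanSpace ℝ (Fin d)) (hahat : 1 < ‖ahat‖)
    (U : EuclideanSpace ℝ (Fin d) → ℝ)
    (hUdef : ∀ θ : EuclideanSpace ℝ (Fin d),
      U θ = (1 / 2) * ‖θ - ahat‖ ^ 2 - Real.log (1 + Real.exp (-(2 * ⟪θ, ahat⟫)))) :
    ContDiff ℝ 3 U ∧
    -- Assumption ALLlip with q = 1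
    (∀ (i : Fin d) (θ θ' : EuclideanSpace ℝ (Fin d)),
        ‖hessComp U i θ - hessComp U i θ'‖ ≤ 56 * ‖ahat‖ ^ 4 * ‖θ - θ'‖) ∧
    (∀ θ θ' : EuclideanSpace ℝ (Fin d),
        ‖hess U θ - hess U θ'‖ ≤ 8 * ‖ahat‖ ^ 3 * ‖θ - θ'‖) ∧
    (∀ θ θ' : EuclideanSpace ℝ (Fin d),
        ‖grad U θ - grad U θ'‖ ≤ (1 + 4 * ‖ahat‖ ^ 2) * ‖θ - θ'‖) ∧
    -- Assumption ADlip with ā = 1/2 and b̄ = |â|²/2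
    (∀ θ : EuclideanSpace ℝ (Fin d),
        (1 / 2) * (‖θ‖ ^ 2 - ‖ahat‖ ^ 2) ≤ ⟪θ, grad U θ⟫) := by
  have hU : U = Uf ahat := funext hUdef
  subst hU
  have ha1 : (1:ℝ) ≤ ‖ahat‖ := le_of_lt hahat
  have h0 : (0:ℝ) ≤ ‖ahat‖ := by linarith
  refine ⟨contDiff_Uf ahat, ?_, ?_, ?_, ?_⟩
  · intro i θ θ'
    have hd0 : (0:ℝ) ≤ ‖θ - θ'‖ := norm_nonneg _
    rw [hessCompEq, hessCompEq]
    have hred : (2 * Real.tanh ⟪ahat, θ⟫ * (1 - Real.tanh ⟪ahat, θ⟫ ^ 2) * ahat i) • Amap ahat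
        - (2 * Real.tanh ⟪ahat, θ'⟫ * (1 - Real.tanh ⟪ahat, θ'⟫ ^ 2) * ahat i) • Amap ahat
        = ((2 * Real.tanh ⟪ahat, θ⟫ * (1 - Real.tanh ⟪ahat, θ⟫ ^ 2)
            - 2 * Real.tanh ⟪ahat, θ'⟫ * (1 - Real.tanh ⟪ahat, θ'⟫ ^ 2)) * ahat i) • Amap ahat := by
      module
    rw [hred, norm_smul_clm, abs_mul]
    have hg : |2 * Real.tanh ⟪ahat, θ⟫ * (1 - Real.tanh ⟪ahat, θ⟫ ^ 2)
        - 2 * Real.tanh ⟪ahat, θ'⟫ * (1 - Real.tanh ⟪ahat, θ'⟫ ^ 2)|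
        ≤ 4 * (‖ahat‖ * ‖θ - θ'‖) := by
      have := g_lip (⟪ahat, θ⟫ : ℝ) (⟪ahat, θ'⟫ : ℝ)
      have h2 := inner_diff_le ahat θ θ'
      linarith
    have hai := abs_coord_le_norm ahat i
    have hA := Amap_norm ahat
    calc |2 * Real.tanh ⟪ahat, θ⟫ * (1 - Real.tanh ⟪ahat, θ⟫ ^ 2)
          - 2 * Real.tanh ⟪ahat, θ'⟫ * (1 - Real.tanh ⟪ahat, θ'⟫ ^ 2)| * |ahat i| * ‖Amap ahat‖
        ≤ (4 * (‖ahat‖ * ‖θ - θ'‖)) * ‖ahat‖ * ‖ahat‖ ^ 2 := by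
          gcongr
      _ ≤ 56 * ‖ahat‖ ^ 4 * ‖θ - θ'‖ := by nlinarith [mul_nonneg (pow_nonneg h0 4) hd0]
  · intro θ θ'
    have hd0 : (0:ℝ) ≤ ‖θ - θ'‖ := norm_nonneg _
    rw [hessEq, hessEq]
    have heq : (ContinuousLinearMap.id ℝ (EuclideanSpace ℝ (Fin d))
          - (1 - Real.tanh ⟪ahat, θ⟫ ^ 2) • Amap ahat)
        - (ContinuousLinearMap.id ℝ (EuclideanSpace ℝ (Fin d))
          - (1 - Real.tanh ⟪ahat, θ'⟫ ^ 2) • Amap ahat)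
        = (Real.tanh ⟪ahat, θ⟫ ^ 2 - Real.tanh ⟪ahat, θ'⟫ ^ 2) • Amap ahat := by
      module
    rw [heq, norm_smul_clm]
    have hg : |Real.tanh ⟪ahat, θ⟫ ^ 2 - Real.tanh ⟪ahat, θ'⟫ ^ 2|
        ≤ 2 * (‖ahat‖ * ‖θ - θ'‖) := by
      have := sq_tanh_lip (⟪ahat, θ⟫ : ℝ) (⟪ahat, θ'⟫ : ℝ)
      have h2 := inner_diff_le ahat θ θ'
      linarith
    have hA := Amap_norm ahat
    calc |Real.tanh ⟪ahat, θ⟫ ^ 2 - Real.tanh ⟪ahat, θ'⟫ ^ 2| * ‖Amap ahat‖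
        ≤ (2 * (‖ahat‖ * ‖θ - θ'‖)) * ‖ahat‖ ^ 2 := by gcongr
      _ ≤ 8 * ‖ahat‖ ^ 3 * ‖θ - θ'‖ := by nlinarith [mul_nonneg (pow_nonneg h0 3) hd0]
  · intro θ θ'
    have hd0 : (0:ℝ) ≤ ‖θ - θ'‖ := norm_nonneg _
    have h : grad (Uf ahat) θ - grad (Uf ahat) θ'
        = (θ - θ') - (Real.tanh ⟪ahat, θ⟫ - Real.tanh ⟪ahat, θ'⟫) • ahat := by
      unfold grad
      rw [gradUf, gradUf]
      module
    rw [h]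
    have ht : |Real.tanh ⟪ahat, θ⟫ - Real.tanh ⟪ahat, θ'⟫| ≤ ‖ahat‖ * ‖θ - θ'‖ := by
      have := tanh_lipschitz (⟪ahat, θ⟫ : ℝ) (⟪ahat, θ'⟫ : ℝ)
      have h2 := inner_diff_le ahat θ θ'
      linarith
    calc ‖(θ - θ') - (Real.tanh ⟪ahat, θ⟫ - Real.tanh ⟪ahat, θ'⟫) • ahat‖
        ≤ ‖θ - θ'‖ + ‖(Real.tanh ⟪ahat, θ⟫ - Real.tanh ⟪ahat, θ'⟫) • ahat‖ := norm_sub_le _ _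
      _ = ‖θ - θ'‖ + |Real.tanh ⟪ahat, θ⟫ - Real.tanh ⟪ahat, θ'⟫| * ‖ahat‖ := by
          rw [norm_smul, Real.norm_eq_abs]
      _ ≤ ‖θ - θ'‖ + (‖ahat‖ * ‖θ - θ'‖) * ‖ahat‖ := by gcongr
      _ ≤ (1 + 4 * ‖ahat‖ ^ 2) * ‖θ - θ'‖ := by nlinarith [mul_nonneg (mul_nonneg h0 h0) hd0]
  · intro θ
    unfold grad
    rw [gradUf, inner_sub_right, real_inner_self_eq_norm_sq, real_inner_smul_right,
      real_inner_comm ahat θ]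
    have h1 : |(⟪ahat, θ⟫ : ℝ)| ≤ ‖ahat‖ * ‖θ‖ := abs_real_inner_le_norm ahat θ
    have h2 : Real.tanh ⟪ahat, θ⟫ * ⟪ahat, θ⟫ ≤ |(⟪ahat, θ⟫ : ℝ)| := by
      calc Real.tanh ⟪ahat, θ⟫ * ⟪ahat, θ⟫ ≤ |Real.tanh ⟪ahat, θ⟫ * ⟪ahat, θ⟫| := le_abs_self _
        _ = |Real.tanh ⟪ahat, θ⟫| * |(⟪ahat, θ⟫ : ℝ)| := abs_mul _ _
        _ ≤ 1 * |(⟪ahat, θ⟫ : ℝ)| := by gcongr ?_ * _; exact abs_tanh_le_one _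
        _ = |(⟪ahat, θ⟫ : ℝ)| := one_mul _
    nlinarith [sq_nonneg (‖ahat‖ - ‖θ‖)]
end
end

section
/- Let d, N ≥ 1, let z_1,…,z_N ∈ ℝ^d and y_1,…,y_N ∈ {0,1}, and define the Bayesian logistic-regression potential U : ℝ^d → ℝ by U(θ) := |θ|²/2 + Σ_{i=1}^N (1 − y_i)⟨θ, z_i⟩ + Σ_{i=1}^N log(1 + e^{−⟨θ, z_i⟩}). Then U is three times continuously differentiable and: (i) U satisfies Assumption ALLlip with q = 1, L̄1 = Σ_{i=1}^N |z_i|⁴, L̄2 = Σ_{i=1}^N |z_i|³ and L̄3 = 1 + Σ_{i=1}^N |z_i|²; (ii) U satisfies Assumption ADlip with ā = 1/2 and b̄ = (Σ_{i=1}^N |1 − y_i||z_i|)²/2 + N. -/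
open MeasureTheory ProbabilityTheory Real
open scoped RealInnerProductSpace ENNReal NNReal BigOperators

noncomputable section

def lphi (t : ℝ) : ℝ := Real.log (1 + Real.exp (-t))
def lphi1 (t : ℝ) : ℝ := -1 / (1 + Real.exp t)
def lphi2 (t : ℝ) : ℝ := Real.exp t / (1 + Real.exp t) ^ 2
def lphi3 (t : ℝ) : ℝ := (Real.exp t - Real.exp t ^ 2) / (1 + Real.exp t) ^ 3
def lphi4 (t : ℝ) : ℝ := (Real.exp t - 4 * Real.exp t ^ 2 + Real.exp t ^ 3) / (1 + Real.exp t) ^ 4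

lemma one_add_exp_pos (t : ℝ) : 0 < 1 + Real.exp t := by positivity

lemma lphi_hasDerivAt (t : ℝ) : HasDerivAt lphi (lphi1 t) t := by
  have h1 : HasDerivAt (fun t : ℝ => 1 + Real.exp (-t)) (-Real.exp (-t)) t := by
    simpa using ((Real.hasDerivAt_exp (-t)).comp t (hasDerivAt_neg t)).const_add 1
  have h2 := h1.log (by positivity)
  refine h2.congr_deriv ?_
  have he := Real.exp_pos t
  rw [lphi1, Real.exp_neg]
  field_simp
  ring

lemma lphi1_hasDerivAt (t : ℝ) : HasDerivAt lphi1 (lphi2 t) t := by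
  have h1 : HasDerivAt (fun t : ℝ => 1 + Real.exp t) (Real.exp t) t := by
    simpa using (Real.hasDerivAt_exp t).const_add 1
  have h2 := (hasDerivAt_const t (-1 : ℝ)).div h1 (by positivity)
  refine h2.congr_deriv ?_
  have he := Real.exp_pos t
  rw [lphi2]
  field_simp
  ring

lemma lphi2_hasDerivAt (t : ℝ) : HasDerivAt lphi2 (lphi3 t) t := by
  have h1 : HasDerivAt (fun t : ℝ => 1 + Real.exp t) (Real.exp t) t := by
    simpa using (Real.hasDerivAt_exp t).const_add 1
  have h2 := (Real.hasDerivAt_exp t).div (h1.pow 2) (pow_ne_zero _ (one_add_exp_pos t).ne')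
  refine h2.congr_deriv ?_
  have he := Real.exp_pos t
  have hd : (0:ℝ) < 1 + Real.exp t := by positivity
  rw [lphi3]
  simp only [Pi.pow_apply]
  field_simp
  ring

lemma lphi3_hasDerivAt (t : ℝ) : HasDerivAt lphi3 (lphi4 t) t := by
  have h1 : HasDerivAt (fun t : ℝ => 1 + Real.exp t) (Real.exp t) t := by
    simpa using (Real.hasDerivAt_exp t).const_add 1
  have hn : HasDerivAt (fun t : ℝ => Real.exp t - Real.exp t ^ 2)
      (Real.exp t - 2 * Real.exp t ^ 2) t := by
    have := (Real.hasDerivAt_exp t).sub ((Real.hasDerivAt_exp t).pow 2)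
    refine this.congr_deriv ?_; ring
  have h2 := hn.div (h1.pow 3) (pow_ne_zero _ (one_add_exp_pos t).ne')
  refine h2.congr_deriv ?_
  have he := Real.exp_pos t
  have hd : (0:ℝ) < 1 + Real.exp t := by positivity
  rw [lphi4]
  simp only [Pi.pow_apply]
  field_simp
  ring

lemma lphi1_bound (t : ℝ) : |lphi1 t| ≤ 1 := by
  have he := Real.exp_pos t
  rw [lphi1, abs_div, div_le_one (by positivity)]
  rw [abs_neg, abs_one, abs_of_pos (show (0:ℝ) < 1 + Real.exp t by positivity)]; linarith

lemma lphi2_bound (t : ℝ) : |lphi2 t| ≤ 1 := by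
  have he := Real.exp_pos t
  rw [lphi2, abs_div, div_le_one (by positivity)]
  rw [abs_of_pos he, abs_of_pos (show (0:ℝ) < (1 + Real.exp t)^2 by positivity)]; nlinarith

lemma lphi3_bound (t : ℝ) : |lphi3 t| ≤ 1 := by
  have he := Real.exp_pos t
  rw [lphi3, abs_div, div_le_one (by positivity)]
  rw [abs_of_pos (show (0:ℝ) < (1 + Real.exp t)^3 by positivity)]
  rw [abs_le]; constructor <;> nlinarith

lemma lphi4_bound (t : ℝ) : |lphi4 t| ≤ 1 := by
  have he := Real.exp_pos t
  rw [lphi4, abs_div, div_le_one (by positivity)]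
  rw [abs_of_pos (show (0:ℝ) < (1 + Real.exp t)^4 by positivity)]
  rw [abs_le]; constructor <;> nlinarith

lemma lip_of_hasDerivAt {f f' : ℝ → ℝ} (hf : ∀ t, HasDerivAt f (f' t) t)
    (hb : ∀ t, |f' t| ≤ 1) (a b : ℝ) : |f a - f b| ≤ |a - b| := by
  have hl : LipschitzWith 1 f := by
    apply lipschitzWith_of_nnnorm_deriv_le (fun t => (hf t).differentiableAt)
    intro t
    rw [(hf t).deriv]
    rw [← NNReal.coe_le_coe]
    simpa [Real.norm_eq_abs] using hb t
  have := hl.dist_le_mul a b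
  simpa [Real.dist_eq] using this

lemma lphi1_lip (a b : ℝ) : |lphi1 a - lphi1 b| ≤ |a - b| :=
  lip_of_hasDerivAt lphi1_hasDerivAt lphi2_bound a b
lemma lphi2_lip (a b : ℝ) : |lphi2 a - lphi2 b| ≤ |a - b| :=
  lip_of_hasDerivAt lphi2_hasDerivAt lphi3_bound a b
lemma lphi3_lip (a b : ℝ) : |lphi3 a - lphi3 b| ≤ |a - b| :=
  lip_of_hasDerivAt lphi3_hasDerivAt lphi4_bound a b

lemma lphi1_mul_ge (t : ℝ) : -1 ≤ lphi1 t * t := by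
  have he := Real.exp_pos t
  have h1 : t + 1 ≤ Real.exp t := Real.add_one_le_exp t
  rw [lphi1]
  rw [div_mul_eq_mul_div, neg_one_mul, neg_div, neg_le, neg_neg, div_le_one (by positivity)]
  linarith

lemma lphi_contDiff : ContDiff ℝ 3 lphi := by
  apply ContDiff.log
  · exact contDiff_const.add (Real.contDiff_exp.comp contDiff_neg)
  · intro x; positivity

section vec
variable {d N : ℕ}
local notation "E" => EuclideanSpace ℝ (Fin d)

lemma hasGradientAt_of_clm {f : E → ℝ} {L : E →L[ℝ] ℝ} {g θ : E}
    (h : HasFDerivAt f L θ) (hg : ∀ v, L v = ⟪g, v⟫) : HasGradientAt f g θ := by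
  rw [hasGradientAt_iff_hasFDerivAt]
  refine h.congr_fderiv ?_
  ext v
  simp [InnerProductSpace.toDual_apply_apply, hg]

variable (z : Fin N → EuclideanSpace ℝ (Fin d)) (y : Fin N → ℝ)

def Ufun (θ : E) : ℝ :=
  ‖θ‖ ^ 2 / 2 + (∑ i, (1 - y i) * ⟪θ, z i⟫) + ∑ i, Real.log (1 + Real.exp (-⟪θ, z i⟫))

def gfun (θ : E) : E :=
  θ + ∑ k, (1 - y k) • z k + ∑ k, lphi1 ⟪z k, θ⟫ • z k

def rank1 (v : E) : E →L[ℝ] E := (innerSL ℝ v).smulRight v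

def Hop (θ : E) : E →L[ℝ] E :=
  ContinuousLinearMap.id ℝ E + ∑ k, lphi2 ⟪z k, θ⟫ • rank1 (z k)

lemma sq_half_hasFDerivAt (θ : E) :
    HasFDerivAt (fun t : E => ‖t‖ ^ 2 / 2) (innerSL ℝ θ) θ := by
  have h0 := (hasFDerivAt_id θ).inner ℝ (hasFDerivAt_id θ)
  have h1 := h0.const_mul (1/2 : ℝ)
  have hfun : (fun t : E => ‖t‖ ^ 2 / 2) = fun t : E => (1/2 : ℝ) * ⟪t, t⟫ := by
    funext t; rw [real_inner_self_eq_norm_sq]; ring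
  rw [hfun]
  refine h1.congr_fderiv ?_
  ext v
  simp [fderivInnerCLM_apply, real_inner_comm]
  have hsym : ∀ a b : E, ∑ x, a x * b x = ∑ x, b x * a x :=
    fun a b => Finset.sum_congr rfl fun x _ => mul_comm _ _
  ring

lemma lin_hasFDerivAt (θ : E) (k : Fin N) :
    HasFDerivAt (fun t : E => (1 - y k) * ⟪t, z k⟫) ((1 - y k) • innerSL ℝ (z k)) θ := by
  have hfun : (fun t : E => (1 - y k) * ⟪t, z k⟫) = fun t : E => (1 - y k) * innerSL ℝ (z k) t := by
    funext t; rw [innerSL_apply_apply, real_inner_comm]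
  rw [hfun]
  exact ((innerSL ℝ (z k)).hasFDerivAt (x := θ)).const_mul (1 - y k)

lemma log_hasFDerivAt (θ : E) (k : Fin N) :
    HasFDerivAt (fun t : E => Real.log (1 + Real.exp (-⟪t, z k⟫)))
      (lphi1 ⟪z k, θ⟫ • innerSL ℝ (z k)) θ := by
  have hfun : (fun t : E => Real.log (1 + Real.exp (-⟪t, z k⟫)))
      = fun t : E => lphi (innerSL ℝ (z k) t) := by
    funext t; rw [lphi, innerSL_apply_apply, real_inner_comm]
  rw [hfun]
  exact (lphi_hasDerivAt _).comp_hasFDerivAt θ (innerSL ℝ (z k)).hasFDerivAt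

lemma Ufun_hasGradientAt (θ : E) : HasGradientAt (Ufun z y) (gfun z y θ) θ := by
  have h := ((sq_half_hasFDerivAt θ).add
      (HasFDerivAt.fun_sum (u := Finset.univ) fun k _ => lin_hasFDerivAt z y θ k)).add
      (HasFDerivAt.fun_sum (u := Finset.univ) fun k _ => log_hasFDerivAt z θ k)
  refine hasGradientAt_of_clm h fun v => ?_
  simp [gfun, inner_add_left, sum_inner, real_inner_smul_left, real_inner_smul_right, real_inner_comm, Finset.mul_sum,
    mul_assoc]

lemma gradient_Ufun : gradient (Ufun z y) = gfun z y :=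
  gradient_eq (Ufun_hasGradientAt z y)

lemma gfun_hasFDerivAt (θ : E) : HasFDerivAt (gfun z y) (Hop z θ) θ := by
  have hterm : ∀ k : Fin N, HasFDerivAt (fun t : E => lphi1 ⟪z k, t⟫ • z k)
      ((lphi2 ⟪z k, θ⟫ • innerSL ℝ (z k)).smulRight (z k)) θ := by
    intro k
    have hc : HasFDerivAt (fun t : E => lphi1 ⟪z k, t⟫) (lphi2 ⟪z k, θ⟫ • innerSL ℝ (z k)) θ := by
      have hfun : (fun t : E => lphi1 ⟪z k, t⟫) = fun t : E => lphi1 (innerSL ℝ (z k) t) := by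
        funext t; rw [innerSL_apply_apply]
      rw [hfun]
      exact (lphi1_hasDerivAt _).comp_hasFDerivAt θ (innerSL ℝ (z k)).hasFDerivAt
    exact hc.smul_const (z k)
  have h := ((hasFDerivAt_id θ).add_const (∑ k, (1 - y k) • z k)).add
      (HasFDerivAt.fun_sum (u := Finset.univ) fun k _ => hterm k)
  have hfun : (fun t : E => t + (∑ k, (1 - y k) • z k) + ∑ k, lphi1 ⟪z k, t⟫ • z k) = gfun z y := by
    funext t; rw [gfun]
  rw [← hfun]
  refine h.congr_fderiv ?_
  ext v j
  simp [Hop, rank1, ContinuousLinearMap.smulRight_apply, smul_smul]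

lemma hess_Ufun (θ : E) : fderiv ℝ (fun x => gradient (Ufun z y) x) θ = Hop z θ := by
  have : (fun x => gradient (Ufun z y) x) = gfun z y := by
    funext x; rw [gradient_Ufun]
  rw [this]
  exact (gfun_hasFDerivAt z y θ).fderiv


lemma sum_smul_apply (w : Fin N → E) (c : Fin N → ℝ) (j : Fin d) :
    (∑ k, c k • w k) j = ∑ k, c k * w k j := by
  calc (∑ k, c k • w k) j = EuclideanSpace.proj (𝕜 := ℝ) j (∑ k, c k • w k) := rfl
    _ = ∑ k, EuclideanSpace.proj (𝕜 := ℝ) j (c k • w k) :=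
        map_sum (EuclideanSpace.proj (𝕜 := ℝ) j) _ _
    _ = ∑ k, c k * w k j := by
        refine Finset.sum_congr rfl fun k _ => ?_
        simp [PiLp.smul_apply, smul_eq_mul]

lemma gfun_apply (θ : E) (i : Fin d) :
    gfun z y θ i = θ i + (∑ k, (1 - y k) * z k i) + ∑ k, lphi1 ⟪z k, θ⟫ * z k i := by
  simp only [gfun, PiLp.add_apply, sum_smul_apply]

def Gi (i : Fin d) (θ : E) : E :=
  EuclideanSpace.single i 1 + ∑ k, (lphi2 ⟪z k, θ⟫ * z k i) • z k

def Ti (i : Fin d) (θ : E) : E →L[ℝ] E :=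
  ∑ k, (lphi3 ⟪z k, θ⟫ * z k i) • rank1 (z k)

lemma gi_hasGradientAt (i : Fin d) (θ : E) :
    HasGradientAt (fun x : E => gfun z y x i) (Gi z i θ) θ := by
  have hfun : (fun x : E => gfun z y x i) = fun x : E =>
      (EuclideanSpace.proj (𝕜 := ℝ) i x + (∑ k, (1 - y k) * z k i))
        + ∑ k, lphi1 (innerSL ℝ (z k) x) * z k i := by
    funext x; rw [gfun_apply]; simp
  have h := (((EuclideanSpace.proj (𝕜 := ℝ) i).hasFDerivAt (x := θ)).add_const
      (∑ k, (1 - y k) * z k i)).add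
      (HasFDerivAt.fun_sum (u := Finset.univ) fun k _ =>
        ((lphi1_hasDerivAt _).comp_hasFDerivAt θ (innerSL ℝ (z k)).hasFDerivAt).mul_const (z k i))
  rw [hfun]
  refine hasGradientAt_of_clm h fun v => ?_
  simp [Gi, inner_add_left, sum_inner, real_inner_smul_left,
    EuclideanSpace.inner_single_left, Finset.mul_sum, mul_assoc]
  try refine Finset.sum_congr rfl fun k _ => Finset.sum_congr rfl fun j _ => by ring
  exact Finset.sum_congr rfl fun k _ => by ring

lemma Gi_hasFDerivAt (i : Fin d) (θ : E) : HasFDerivAt (Gi z i) (Ti z i θ) θ := by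
  have hterm : ∀ k : Fin N, HasFDerivAt (fun x : E => (lphi2 ⟪z k, x⟫ * z k i) • z k)
      (((z k i) • (lphi3 ⟪z k, θ⟫ • innerSL ℝ (z k))).smulRight (z k)) θ := by
    intro k
    have hc : HasFDerivAt (fun x : E => lphi2 ⟪z k, x⟫) (lphi3 ⟪z k, θ⟫ • innerSL ℝ (z k)) θ := by
      have hfun : (fun x : E => lphi2 ⟪z k, x⟫) = fun x : E => lphi2 (innerSL ℝ (z k) x) := by
        funext x; rw [innerSL_apply_apply]
      rw [hfun]
      exact (lphi2_hasDerivAt _).comp_hasFDerivAt θ (innerSL ℝ (z k)).hasFDerivAt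
    have := (hc.mul_const (z k i)).smul_const (z k)
    convert this using 2
    all_goals ext v
    all_goals simp [smul_smul, mul_comm]
  have h := (HasFDerivAt.fun_sum (u := Finset.univ) fun k _ => hterm k).const_add
      (EuclideanSpace.single i 1)
  have hfun : (fun x : E => EuclideanSpace.single i 1 + ∑ k, (lphi2 ⟪z k, x⟫ * z k i) • z k)
      = Gi z i := by
    funext x; rw [Gi]
  rw [← hfun]
  refine h.congr_fderiv ?_
  ext v j
  simp only [Ti, rank1, ContinuousLinearMap.sum_apply, ContinuousLinearMap.smul_apply,
    ContinuousLinearMap.smulRight_apply, ContinuousLinearMap.add_apply]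
  rw [sum_smul_apply, sum_smul_apply]
  refine Finset.sum_congr rfl fun k _ => ?_
  simp only [innerSL_apply_apply, PiLp.smul_apply, smul_eq_mul]
  ring

lemma hess_comp_Ufun (i : Fin d) (θ : E) :
    fderiv ℝ (fun x => gradient (fun x' => gradient (Ufun z y) x' i) x) θ = Ti z i θ := by
  have h1 : (fun x' => gradient (Ufun z y) x' i) = fun x' : E => gfun z y x' i := by
    funext x'; rw [gradient_Ufun]
  have h2 : (fun x => gradient (fun x' => gradient (Ufun z y) x' i) x) = Gi z i := by
    funext x
    rw [h1]
    exact (gi_hasGradientAt z y i x).gradient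
  rw [h2]
  exact (Gi_hasFDerivAt z i θ).fderiv


lemma norm_rank1_le (v : E) : ‖rank1 v‖ ≤ ‖v‖ ^ 2 := by
  rw [rank1, ContinuousLinearMap.norm_smulRight_apply, innerSL_apply_norm, sq]

lemma inner_diff_abs (v θ θ' : E) : |⟪v, θ⟫ - ⟪v, θ'⟫| ≤ ‖v‖ * ‖θ - θ'‖ := by
  rw [← inner_sub_right]
  exact abs_real_inner_le_norm _ _

lemma abs_coord_le (v : E) (i : Fin d) : |v i| ≤ ‖v‖ := by
  have h := abs_real_inner_le_norm (EuclideanSpace.single i (1 : ℝ)) v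
  simpa [EuclideanSpace.inner_single_left, EuclideanSpace.norm_single] using h

lemma gfun_lip (θ θ' : E) :
    ‖gfun z y θ - gfun z y θ'‖ ≤ (1 + ∑ k, ‖z k‖ ^ 2) * ‖θ - θ'‖ := by
  have hdiff : gfun z y θ - gfun z y θ'
      = (θ - θ') + ∑ k, (lphi1 ⟪z k, θ⟫ - lphi1 ⟪z k, θ'⟫) • z k := by
    simp only [gfun, sub_smul, Finset.sum_sub_distrib]
    abel
  rw [hdiff]
  refine (norm_add_le _ _).trans ?_
  have hsum : ‖∑ k, (lphi1 ⟪z k, θ⟫ - lphi1 ⟪z k, θ'⟫) • z k‖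
      ≤ ∑ k, ‖z k‖ ^ 2 * ‖θ - θ'‖ := by
    refine (norm_sum_le _ _).trans (Finset.sum_le_sum fun k _ => ?_)
    rw [norm_smul, Real.norm_eq_abs]
    have h1 := (lphi1_lip ⟪z k, θ⟫ ⟪z k, θ'⟫).trans (inner_diff_abs (z k) θ θ')
    calc |lphi1 ⟪z k, θ⟫ - lphi1 ⟪z k, θ'⟫| * ‖z k‖ ≤ (‖z k‖ * ‖θ - θ'‖) * ‖z k‖ := by
          exact mul_le_mul_of_nonneg_right h1 (norm_nonneg _)
      _ = ‖z k‖ ^ 2 * ‖θ - θ'‖ := by ring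
  calc ‖θ - θ'‖ + ‖∑ k, (lphi1 ⟪z k, θ⟫ - lphi1 ⟪z k, θ'⟫) • z k‖
      ≤ ‖θ - θ'‖ + ∑ k, ‖z k‖ ^ 2 * ‖θ - θ'‖ := by linarith
    _ = (1 + ∑ k, ‖z k‖ ^ 2) * ‖θ - θ'‖ := by rw [add_mul, one_mul, Finset.sum_mul]

lemma Hop_lip (θ θ' : E) :
    ‖Hop z θ - Hop z θ'‖ ≤ (∑ k, ‖z k‖ ^ 3) * ‖θ - θ'‖ := by
  refine ContinuousLinearMap.opNorm_le_bound _ (by positivity) fun w => ?_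
  have happ : (Hop z θ - Hop z θ') w
      = ∑ k, (lphi2 ⟪z k, θ⟫ - lphi2 ⟪z k, θ'⟫) • (⟪z k, w⟫ • z k) := by
    simp [Hop, rank1, ContinuousLinearMap.sub_apply, ContinuousLinearMap.add_apply,
      ContinuousLinearMap.sum_apply, ContinuousLinearMap.smul_apply,
      ContinuousLinearMap.smulRight_apply, sub_smul, Finset.sum_sub_distrib]
  rw [happ]
  calc ‖∑ k, (lphi2 ⟪z k, θ⟫ - lphi2 ⟪z k, θ'⟫) • (⟪z k, w⟫ • z k)‖
      ≤ ∑ k, ‖(lphi2 ⟪z k, θ⟫ - lphi2 ⟪z k, θ'⟫) • (⟪z k, w⟫ • z k)‖ := norm_sum_le _ _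
    _ ≤ ∑ k, ‖z k‖ ^ 3 * ‖θ - θ'‖ * ‖w‖ := by
        refine Finset.sum_le_sum fun k _ => ?_
        rw [norm_smul, norm_smul, Real.norm_eq_abs, Real.norm_eq_abs]
        have h1 := (lphi2_lip ⟪z k, θ⟫ ⟪z k, θ'⟫).trans (inner_diff_abs (z k) θ θ')
        have h2 : |⟪z k, w⟫| ≤ ‖z k‖ * ‖w‖ := abs_real_inner_le_norm _ _
        calc |lphi2 ⟪z k, θ⟫ - lphi2 ⟪z k, θ'⟫| * (|⟪z k, w⟫| * ‖z k‖)
            ≤ (‖z k‖ * ‖θ - θ'‖) * ((‖z k‖ * ‖w‖) * ‖z k‖) := by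
              refine mul_le_mul h1 (mul_le_mul_of_nonneg_right h2 (norm_nonneg _))
                (by positivity) (by positivity)
          _ = ‖z k‖ ^ 3 * ‖θ - θ'‖ * ‖w‖ := by ring
    _ = (∑ k, ‖z k‖ ^ 3) * ‖θ - θ'‖ * ‖w‖ := by
        rw [← Finset.sum_mul, ← Finset.sum_mul]

lemma Ti_lip (i : Fin d) (θ θ' : E) :
    ‖Ti z i θ - Ti z i θ'‖ ≤ (∑ k, ‖z k‖ ^ 4) * ‖θ - θ'‖ := by
  refine ContinuousLinearMap.opNorm_le_bound _ (by positivity) fun w => ?_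
  have happ : (Ti z i θ - Ti z i θ') w
      = ∑ k, ((lphi3 ⟪z k, θ⟫ - lphi3 ⟪z k, θ'⟫) * z k i) • (⟪z k, w⟫ • z k) := by
    simp [Ti, rank1, ContinuousLinearMap.sub_apply,
      ContinuousLinearMap.sum_apply, ContinuousLinearMap.smul_apply,
      ContinuousLinearMap.smulRight_apply, sub_mul, sub_smul, Finset.sum_sub_distrib]
  rw [happ]
  calc ‖∑ k, ((lphi3 ⟪z k, θ⟫ - lphi3 ⟪z k, θ'⟫) * z k i) • (⟪z k, w⟫ • z k)‖
      ≤ ∑ k, ‖((lphi3 ⟪z k, θ⟫ - lphi3 ⟪z k, θ'⟫) * z k i) • (⟪z k, w⟫ • z k)‖ :=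
        norm_sum_le _ _
    _ ≤ ∑ k, ‖z k‖ ^ 4 * ‖θ - θ'‖ * ‖w‖ := by
        refine Finset.sum_le_sum fun k _ => ?_
        rw [norm_smul, norm_smul, Real.norm_eq_abs, Real.norm_eq_abs, abs_mul]
        have h1 := (lphi3_lip ⟪z k, θ⟫ ⟪z k, θ'⟫).trans (inner_diff_abs (z k) θ θ')
        have h2 : |⟪z k, w⟫| ≤ ‖z k‖ * ‖w‖ := abs_real_inner_le_norm _ _
        have h3 := abs_coord_le (z k) i
        calc |lphi3 ⟪z k, θ⟫ - lphi3 ⟪z k, θ'⟫| * |z k i| * (|⟪z k, w⟫| * ‖z k‖)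
            ≤ ((‖z k‖ * ‖θ - θ'‖) * ‖z k‖) * ((‖z k‖ * ‖w‖) * ‖z k‖) := by
              refine mul_le_mul
                (mul_le_mul h1 h3 (abs_nonneg _) (by positivity))
                (mul_le_mul_of_nonneg_right h2 (norm_nonneg _))
                (by positivity) (by positivity)
          _ = ‖z k‖ ^ 4 * ‖θ - θ'‖ * ‖w‖ := by ring
    _ = (∑ k, ‖z k‖ ^ 4) * ‖θ - θ'‖ * ‖w‖ := by
        rw [← Finset.sum_mul, ← Finset.sum_mul]

lemma Ufun_contDiff : ContDiff ℝ 3 (Ufun z y) := by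
  refine ContDiff.add (ContDiff.add ?_ ?_) ?_
  · exact (contDiff_norm_sq ℝ).div_const 2
  · exact ContDiff.sum fun k _ => contDiff_const.mul (contDiff_id.inner ℝ contDiff_const)
  · refine ContDiff.sum fun k _ => ?_
    have h : (fun θ : E => Real.log (1 + Real.exp (-⟪θ, z k⟫)))
        = lphi ∘ (fun θ : E => ⟪θ, z k⟫) := rfl
    rw [h]
    exact lphi_contDiff.comp (contDiff_id.inner ℝ contDiff_const)

lemma gfun_adlip (θ : E) :
    (1 / 2) * ‖θ‖ ^ 2 - ((∑ k, |1 - y k| * ‖z k‖) ^ 2 / 2 + N) ≤ ⟪θ, gfun z y θ⟫ := by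
  have hexp : ⟪θ, gfun z y θ⟫
      = ‖θ‖ ^ 2 + (∑ k, (1 - y k) * ⟪θ, z k⟫) + ∑ k, lphi1 ⟪z k, θ⟫ * ⟪θ, z k⟫ := by
    simp only [gfun, inner_add_right, inner_sum, real_inner_smul_right,
      real_inner_self_eq_norm_sq]
  set S := ∑ k, |1 - y k| * ‖z k‖ with hS
  have h1 : -(N : ℝ) ≤ ∑ k, lphi1 ⟪z k, θ⟫ * ⟪θ, z k⟫ := by
    have hb : ∀ k : Fin N, (-1 : ℝ) ≤ lphi1 ⟪z k, θ⟫ * ⟪θ, z k⟫ := by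
      intro k
      rw [real_inner_comm θ (z k)]
      exact lphi1_mul_ge _
    calc -(N : ℝ) = ∑ _k : Fin N, (-1 : ℝ) := by simp
      _ ≤ _ := Finset.sum_le_sum fun k _ => hb k
  have h2 : -(S * ‖θ‖) ≤ ∑ k, (1 - y k) * ⟪θ, z k⟫ := by
    have hterm : ∀ k : Fin N, -(|1 - y k| * ‖z k‖ * ‖θ‖) ≤ (1 - y k) * ⟪θ, z k⟫ := by
      intro k
      have habs : |(1 - y k) * ⟪θ, z k⟫| ≤ |1 - y k| * ‖z k‖ * ‖θ‖ := by
        rw [abs_mul]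
        calc |1 - y k| * |⟪θ, z k⟫| ≤ |1 - y k| * (‖θ‖ * ‖z k‖) :=
              mul_le_mul_of_nonneg_left (abs_real_inner_le_norm θ (z k)) (abs_nonneg _)
          _ = |1 - y k| * ‖z k‖ * ‖θ‖ := by ring
      linarith [neg_abs_le ((1 - y k) * ⟪θ, z k⟫)]
    calc -(S * ‖θ‖) = ∑ k, -(|1 - y k| * ‖z k‖ * ‖θ‖) := by
          rw [Finset.sum_neg_distrib, hS, Finset.sum_mul]
      _ ≤ ∑ k, (1 - y k) * ⟪θ, z k⟫ := Finset.sum_le_sum fun k _ => hterm k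
  have h3 : S * ‖θ‖ ≤ S ^ 2 / 2 + ‖θ‖ ^ 2 / 2 := by nlinarith [sq_nonneg (S - ‖θ‖)]
  rw [hexp]
  linarith

end vec

/-- Proposition `prop:lrexample` of the paper: the Bayesian
logistic-regression potential satisfies Assumptions ALLlip (with `q = 1`,
`L̄1 = ∑ |z_i|⁴`, `L̄2 = ∑ |z_i|³`, `L̄3 = 1 + ∑ |z_i|²`) and ADlip
(with `ā = 1/2`, `b̄ = (∑ |1 - y_i||z_i|)²/2 + N`). -/
theorem logistic_regression_satisfies_assumptions
    (d N : ℕ) (hd : 1 ≤ d) (hN : 1 ≤ N)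
    (z : Fin N → EuclideanSpace ℝ (Fin d)) (y : Fin N → ℝ)
    (hy : ∀ i, y i = 0 ∨ y i = 1)
    (U : EuclideanSpace ℝ (Fin d) → ℝ)
    (hUdef : ∀ θ : EuclideanSpace ℝ (Fin d),
      U θ = ‖θ‖ ^ 2 / 2 + (∑ i, (1 - y i) * ⟪θ, z i⟫)
        + ∑ i, Real.log (1 + Real.exp (-⟪θ, z i⟫))) :
    ContDiff ℝ 3 U ∧
    -- Assumption ALLlip with q = 1
    (∀ (i : Fin d) (θ θ' : EuclideanSpace ℝ (Fin d)),
        ‖hessComp U i θ - hessComp U i θ'‖ ≤ (∑ i, ‖z i‖ ^ 4) * ‖θ - θ'‖) ∧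
    (∀ θ θ' : EuclideanSpace ℝ (Fin d),
        ‖hess U θ - hess U θ'‖ ≤ (∑ i, ‖z i‖ ^ 3) * ‖θ - θ'‖) ∧
    (∀ θ θ' : EuclideanSpace ℝ (Fin d),
        ‖grad U θ - grad U θ'‖ ≤ (1 + ∑ i, ‖z i‖ ^ 2) * ‖θ - θ'‖) ∧
    -- Assumption ADlip with ā = 1/2 and b̄ = (∑ |1 - y_i||z_i|)²/2 + N
    (∀ θ : EuclideanSpace ℝ (Fin d),
        (1 / 2) * ‖θ‖ ^ 2 - ((∑ i, |1 - y i| * ‖z i‖) ^ 2 / 2 + N)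
          ≤ ⟪θ, grad U θ⟫) := by
  have hU : U = Ufun z y := funext hUdef
  subst hU
  refine ⟨Ufun_contDiff z y, ?_, ?_, ?_, ?_⟩
  · intro i θ θ'
    have h : ∀ t, hessComp (Ufun z y) i t = Ti z i t := by
      intro t
      simp only [hessComp, gradComp]
      exact hess_comp_Ufun z y i t
    rw [h θ, h θ']
    exact Ti_lip z i θ θ'
  · intro θ θ'
    have h : ∀ t, hess (Ufun z y) t = Hop z t := by
      intro t
      simp only [hess]
      exact hess_Ufun z y t
    rw [h θ, h θ']
    exact Hop_lip z θ θ'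
  · intro θ θ'
    have h : ∀ t, grad (Ufun z y) t = gfun z y t := by
      intro t
      simp only [grad]
      rw [gradient_Ufun]
    rw [h θ, h θ']
    exact gfun_lip z y θ θ'
  · intro θ
    have h : grad (Ufun z y) θ = gfun z y θ := by
      simp only [grad]
      rw [gradient_Ufun]
    rw [h]
    exact gfun_adlip z y θ
end
end
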